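/- arXiv:0802.4272 — 9 statements merged into one kernel-verified Lean document; each statement's English description precedes it below -/
import Mathlib

section
/- F has exactly one zero θ_l in the interval (−π/2, π/2), and θ_l ∈ (−π/2, 0); F has exactly one zero θ_r in (π/2, 3π/2), and θ_r ∈ (π, 3π/2); F > 0 on the open interval (θ_l, θ_r); and g(θ) → +∞ both as θ → θ_l from the right and as θ → θ_r from the left. -/
open Filter

/-- Zeros θ_l, θ_r of F(θ) = κ + c sin θ + e(θ), positivity of F in between,
and blow-up of g(θ) = θ + a - d ln F(θ) at both ends. -/
theorem stmt4 (c d κ a : ℝ) (hc : c ∈ Set.Icc (2:ℝ) 10) (hd : 100 ≤ d)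
    (hκ : κ ∈ Set.Icc (1/2 : ℝ) (3/2)) (e : ℝ → ℝ) (he : ContDiff ℝ 2 e)
    (hbd : ∀ θ, |e θ| + |deriv e θ| + |deriv (deriv e) θ| ≤ 1/100)
    (F g : ℝ → ℝ) (hF : F = fun θ => κ + c * Real.sin θ + e θ)
    (hg : g = fun θ => θ + a - d * Real.log (F θ)) :
    ∃ θl θr : ℝ,
      θl ∈ Set.Ioo (-(Real.pi/2)) 0 ∧
      (∀ θ ∈ Set.Ioo (-(Real.pi/2)) (Real.pi/2), (F θ = 0 ↔ θ = θl)) ∧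
      θr ∈ Set.Ioo Real.pi (3 * Real.pi / 2) ∧
      (∀ θ ∈ Set.Ioo (Real.pi/2) (3 * Real.pi / 2), (F θ = 0 ↔ θ = θr)) ∧
      (∀ θ ∈ Set.Ioo θl θr, 0 < F θ) ∧
      Tendsto g (nhdsWithin θl (Set.Ioi θl)) atTop ∧
      Tendsto g (nhdsWithin θr (Set.Iio θr)) atTop := by
  obtain ⟨hc2, hc10⟩ := hc
  obtain ⟨hκ1, hκ2⟩ := hκ
  have hπ : (3:ℝ) < Real.pi := Real.pi_gt_three
  have hde : Differentiable ℝ e := he.differentiable (by norm_num)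
  have hbe : ∀ θ, |e θ| ≤ 1/100 := fun θ => by
    have h := hbd θ
    have h1 := abs_nonneg (deriv e θ)
    have h2 := abs_nonneg (deriv (deriv e) θ)
    linarith
  have hbe' : ∀ θ, |deriv e θ| ≤ 1/100 := fun θ => by
    have h := hbd θ
    have h1 := abs_nonneg (e θ)
    have h2 := abs_nonneg (deriv (deriv e) θ)
    linarith
  have hsin1 : (75:ℝ)/96 ≤ Real.sin 1 := by
    have h := abs_le.mp (Real.sin_bound (x := 1) (by norm_num))
    have h1 := h.1
    norm_num at h1 ⊢
    linarith
  have hcos1 : (43:ℝ)/96 ≤ Real.cos 1 := by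
    have h := abs_le.mp (Real.cos_bound (x := 1) (by norm_num))
    have h1 := h.1
    norm_num at h1 ⊢
    linarith
  have hF' : ∀ x, HasDerivAt F (c * Real.cos x + deriv e x) x := by
    intro x
    rw [hF]
    exact (((Real.hasDerivAt_sin x).const_mul c).const_add κ).add (hde x).hasDerivAt
  have hFc : Continuous F := by rw [hF]; exact (continuous_const.add (continuous_const.mul Real.continuous_sin)).add hde.continuous
  -- F > 0 when sin θ ≥ 0
  have hA : ∀ θ, 0 ≤ Real.sin θ → 0 < F θ := by
    intro θ hs
    have h1 := (abs_le.mp (hbe θ)).1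
    rw [hF]
    have : 0 ≤ c * Real.sin θ := mul_nonneg (by linarith) hs
    dsimp only
    linarith
  -- F < 0 when sin θ ≤ - sin 1
  have hB : ∀ θ, Real.sin θ ≤ -Real.sin 1 → F θ < 0 := by
    intro θ hs
    have h1 := (abs_le.mp (hbe θ)).2
    have hsneg : Real.sin θ ≤ -(75/96:ℝ) := by linarith
    have hcs : c * Real.sin θ ≤ 2 * Real.sin θ := by nlinarith
    rw [hF]
    dsimp only
    linarith
  have hMono : StrictMonoOn F (Set.Icc (-1:ℝ) 0) := by
    apply strictMonoOn_of_deriv_pos (convex_Icc _ _) hFc.continuousOn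
    intro x hx
    rw [interior_Icc] at hx
    rw [(hF' x).deriv]
    have h1 : |x| ≤ 1 := abs_le.mpr ⟨hx.1.le, by linarith [hx.2]⟩
    have hcx : Real.cos 1 ≤ Real.cos x := by
      rw [← Real.cos_abs x]
      exact Real.cos_le_cos_of_nonneg_of_le_pi (abs_nonneg x) (by linarith) h1
    have hb := (abs_le.mp (hbe' x)).1
    nlinarith [mul_nonneg (sub_nonneg.2 hc2) (le_trans (by linarith) hcx : (0:ℝ) ≤ Real.cos x)]
  have hAnti : StrictAntiOn F (Set.Icc Real.pi (Real.pi + 1)) := by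
    apply strictAntiOn_of_deriv_neg (convex_Icc _ _) hFc.continuousOn
    intro x hx
    rw [interior_Icc] at hx
    rw [(hF' x).deriv]
    have hx1 : Real.cos 1 ≤ Real.cos (x - Real.pi) :=
      Real.cos_le_cos_of_nonneg_of_le_pi (by linarith [hx.1]) (by linarith) (by linarith [hx.2])
    have hcx : Real.cos x ≤ -Real.cos 1 := by
      have h := Real.cos_add_pi (x - Real.pi)
      rw [sub_add_cancel] at h
      rw [h]; linarith
    have hb := (abs_le.mp (hbe' x)).2
    nlinarith [mul_nonneg (sub_nonneg.2 hc2) (neg_nonneg.2 (le_trans hcx (by linarith) : Real.cos x ≤ 0))]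
  have hFm1 : F (-1) < 0 := hB _ (by rw [Real.sin_neg])
  have hF0 : 0 < F 0 := hA 0 (by simp)
  have hFpi : 0 < F Real.pi := hA _ (by rw [Real.sin_pi])
  have hFpi1 : F (Real.pi + 1) < 0 := hB _ (by rw [add_comm, Real.sin_add_pi])
  obtain ⟨θl, hθl, hFθl⟩ :=
    intermediate_value_Ioo (by norm_num : (-1:ℝ) ≤ 0) hFc.continuousOn ⟨hFm1, hF0⟩
  obtain ⟨θr, hθr, hFθr⟩ :=
    intermediate_value_Ioo' (by linarith : Real.pi ≤ Real.pi + 1) hFc.continuousOn ⟨hFpi1, hFpi⟩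
  have hθlmem : θl ∈ Set.Ioo (-(Real.pi/2)) 0 := ⟨by linarith [hθl.1], hθl.2⟩
  have hθrmem : θr ∈ Set.Ioo Real.pi (3 * Real.pi / 2) := ⟨hθr.1, by linarith [hθr.2]⟩
  -- positivity on (θl, θr)
  have hpos : ∀ θ ∈ Set.Ioo θl θr, 0 < F θ := by
    intro θ hθ
    rcases le_or_gt θ 0 with h | h
    · have := hMono ⟨hθl.1.le, hθl.2.le⟩ ⟨by linarith [hθl.1, hθ.1], h⟩ hθ.1
      linarith [hFθl]
    rcases le_or_gt θ Real.pi with h2 | h2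
    · exact hA θ (Real.sin_nonneg_of_nonneg_of_le_pi h.le h2)
    · have := hAnti ⟨h2.le, by linarith [hθr.2, hθ.2]⟩ ⟨hθr.1.le, hθr.2.le⟩ hθ.2
      linarith [hFθr]
  refine ⟨θl, θr, hθlmem, ?_, hθrmem, ?_, hpos, ?_, ?_⟩
  · -- uniqueness on (-π/2, π/2)
    intro θ hθ
    constructor
    · intro h0
      rcases le_or_gt θ (-1) with h | h
      · exfalso
        have hsle : Real.sin θ ≤ Real.sin (-1) :=
          Real.strictMonoOn_sin.monotoneOn ⟨hθ.1.le, hθ.2.le⟩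
            ⟨by linarith, by linarith⟩ h
        rw [Real.sin_neg] at hsle
        have := hB θ hsle
        linarith
      rcases le_or_gt θ 0 with h2 | h2
      · exact hMono.injOn ⟨h.le, h2⟩ ⟨hθl.1.le, hθl.2.le⟩ (by rw [h0, hFθl])
      · exfalso
        have := hA θ (Real.sin_nonneg_of_nonneg_of_le_pi h2.le (by linarith [hθ.2]))
        linarith
    · rintro rfl; exact hFθl
  · -- uniqueness on (π/2, 3π/2)
    intro θ hθ
    constructor
    · intro h0
      rcases le_or_gt θ Real.pi with h | h
      · exfalso
        have := hA θ (Real.sin_nonneg_of_nonneg_of_le_pi (by linarith [hθ.1]) h)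
        linarith
      rcases le_or_gt θ (Real.pi + 1) with h2 | h2
      · exact hAnti.injOn ⟨h.le, h2⟩ ⟨hθr.1.le, hθr.2.le⟩ (by rw [h0, hFθr])
      · exfalso
        have hs1 : Real.sin 1 ≤ Real.sin (θ - Real.pi) :=
          Real.strictMonoOn_sin.monotoneOn ⟨by linarith, by linarith⟩
            ⟨by linarith, by linarith [hθ.2]⟩ (by linarith)
        have hsθ : Real.sin θ = -Real.sin (θ - Real.pi) := by
          have h := Real.sin_add_pi (θ - Real.pi)
          rw [sub_add_cancel] at h
          rw [h]
        have := hB θ (by rw [hsθ]; linarith)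
        linarith
    · rintro rfl; exact hFθr
  · -- blow-up at θl from the right
    have hθlr : θl < θr := by linarith [hθl.2, hθr.1]
    have hFt : Tendsto F (nhdsWithin θl (Set.Ioi θl)) (nhdsWithin 0 (Set.Ioi 0)) := by
      apply tendsto_nhdsWithin_of_tendsto_nhds_of_eventually_within
      · have := (hFc.tendsto θl).mono_left (nhdsWithin_le_nhds (s := Set.Ioi θl))
        rwa [hFθl] at this
      · filter_upwards [Ioo_mem_nhdsGT_of_mem ⟨le_refl θl, hθlr⟩] with θ hθ
        exact hpos θ hθ
    have hlog : Tendsto (fun θ => Real.log (F θ)) (nhdsWithin θl (Set.Ioi θl)) atBot :=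
      Real.tendsto_log_nhdsGT_zero.comp hFt
    have h2 : Tendsto (fun θ => -(d * Real.log (F θ))) (nhdsWithin θl (Set.Ioi θl)) atTop := by
      rw [tendsto_neg_atTop_iff]
      exact hlog.const_mul_atBot (by linarith)
    have h1 : Tendsto (fun θ : ℝ => θ + a) (nhdsWithin θl (Set.Ioi θl)) (nhds (θl + a)) :=
      ((continuous_id.add continuous_const).tendsto θl).mono_left nhdsWithin_le_nhds
    rw [hg]
    simpa [sub_eq_add_neg] using h1.add_atTop h2
  · -- blow-up at θr from the left
    have hθlr : θl < θr := by linarith [hθl.2, hθr.1]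
    have hFt : Tendsto F (nhdsWithin θr (Set.Iio θr)) (nhdsWithin 0 (Set.Ioi 0)) := by
      apply tendsto_nhdsWithin_of_tendsto_nhds_of_eventually_within
      · have := (hFc.tendsto θr).mono_left (nhdsWithin_le_nhds (s := Set.Iio θr))
        rwa [hFθr] at this
      · filter_upwards [Ioo_mem_nhdsLT_of_mem ⟨hθlr, le_refl θr⟩] with θ hθ
        exact hpos θ hθ
    have hlog : Tendsto (fun θ => Real.log (F θ)) (nhdsWithin θr (Set.Iio θr)) atBot :=
      Real.tendsto_log_nhdsGT_zero.comp hFt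
    have h2 : Tendsto (fun θ => -(d * Real.log (F θ))) (nhdsWithin θr (Set.Iio θr)) atTop := by
      rw [tendsto_neg_atTop_iff]
      exact hlog.const_mul_atBot (by linarith)
    have h1 : Tendsto (fun θ : ℝ => θ + a) (nhdsWithin θr (Set.Iio θr)) (nhds (θr + a)) :=
      ((continuous_id.add continuous_const).tendsto θr).mono_left nhdsWithin_le_nhds
    rw [hg]
    simpa [sub_eq_add_neg] using h1.add_atTop h2
end

section
/- Let θ_l ∈ (−π/2, 0) and θ_r ∈ (π, 3π/2) be the unique zeros of F in (−π/2, π/2) and (π/2, 3π/2) respectively, so that F > 0 on (θ_l, θ_r). Then g″(θ) > 0 for every θ ∈ (θ_l, θ_r); moreover g′(θ) → −∞ as θ → θ_l from the right and g′(θ) → +∞ as θ → θ_r from the left; consequently there is exactly one point θ_c ∈ (θ_l, θ_r) with g′(θ_c) = 0. -/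
open Filter

private lemma prod_lb' (x y a b : ℝ) (hx1 : -a ≤ x) (hx2 : x ≤ a)
    (hy1 : -b ≤ y) (hy2 : y ≤ b) : -(a*b) ≤ x*y := by
  nlinarith [mul_nonneg (by linarith : (0:ℝ) ≤ a - x) (by linarith : (0:ℝ) ≤ b - y),
    mul_nonneg (by linarith : (0:ℝ) ≤ a + x) (by linarith : (0:ℝ) ≤ y + b)]

private lemma prod_ub' (x y a b : ℝ) (hx1 : -a ≤ x) (hx2 : x ≤ a)
    (hy1 : -b ≤ y) (hy2 : y ≤ b) : x*y ≤ a*b := by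
  nlinarith [mul_nonneg (by linarith : (0:ℝ) ≤ a - x) (by linarith : (0:ℝ) ≤ y + b),
    mul_nonneg (by linarith : (0:ℝ) ≤ a + x) (by linarith : (0:ℝ) ≤ b - y)]

private lemma key_core (c κ u v E E' E'' : ℝ) (hc2 : 2 ≤ c)
    (hκ1 : 1/2 ≤ κ) (hκ2 : κ ≤ 3/2)
    (huv : u^2 + v^2 = c^2) (hucl : -c ≤ u)
    (hu1 : -10 ≤ u) (hu2 : u ≤ 10) (hv1 : -10 ≤ v) (hv2 : v ≤ 10)
    (hE1 : -(1/100) ≤ E) (hE2 : E ≤ 1/100)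
    (hE'1 : -(1/100) ≤ E') (hE'2 : E' ≤ 1/100)
    (hE''1 : -(1/100) ≤ E'') (hE''2 : E'' ≤ 1/100) :
    1/2 ≤ (v + E') * (v + E') - (κ + u + E) * (-u + E'') := by
  have hA : (1:ℝ) ≤ c^2 + κ*u := by
    nlinarith [mul_nonneg (by linarith : (0:ℝ) ≤ κ) (by linarith : (0:ℝ) ≤ u + c),
      mul_nonneg (by linarith : (0:ℝ) ≤ c - κ) (by linarith : (0:ℝ) ≤ c - 2)]
  have hB := prod_lb' u E 10 (1/100) hu1 hu2 hE1 hE2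
  have hC := prod_lb' v E' 10 (1/100) hv1 hv2 hE'1 hE'2
  have hD := prod_ub' E'' u (1/100) 10 hE''1 hE''2 hu1 hu2
  have hK : E''*κ ≤ 3/200 := by
    nlinarith [prod_ub' E'' κ (1/100) (3/2) hE''1 hE''2 (by linarith) hκ2]
  have hG : E''*E ≤ 1/1000 := by
    nlinarith [prod_ub' E'' E (1/100) (1/100) hE''1 hE''2 hE1 hE2]
  nlinarith [sq_nonneg E', hA, hB, hC, hD, hK, hG, huv]

private lemma key_ineq (c κ s t E E' E'' : ℝ) (hc2 : 2 ≤ c) (hc10 : c ≤ 10)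
    (hκ1 : 1/2 ≤ κ) (hκ2 : κ ≤ 3/2) (hst : s^2 + t^2 = 1)
    (hs1 : -1 ≤ s) (hs2 : s ≤ 1) (ht1 : -1 ≤ t) (ht2 : t ≤ 1)
    (hE1 : -(1/100) ≤ E) (hE2 : E ≤ 1/100)
    (hE'1 : -(1/100) ≤ E') (hE'2 : E' ≤ 1/100)
    (hE''1 : -(1/100) ≤ E'') (hE''2 : E'' ≤ 1/100) :
    1/2 ≤ (c*t + E') * (c*t + E') - (κ + c*s + E) * (-(c*s) + E'') := by
  have h0c : (0:ℝ) ≤ c := by linarith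
  have huv : (c*s)^2 + (c*t)^2 = c^2 := by nlinarith
  have hucl : -c ≤ c*s := by nlinarith [mul_nonneg h0c (by linarith : (0:ℝ) ≤ 1 + s)]
  have hu1 : -10 ≤ c*s := by nlinarith [mul_nonneg h0c (by linarith : (0:ℝ) ≤ 1 + s)]
  have hu2 : c*s ≤ 10 := by nlinarith [mul_nonneg h0c (by linarith : (0:ℝ) ≤ 1 - s)]
  have hv1 : -10 ≤ c*t := by nlinarith [mul_nonneg h0c (by linarith : (0:ℝ) ≤ 1 + t)]
  have hv2 : c*t ≤ 10 := by nlinarith [mul_nonneg h0c (by linarith : (0:ℝ) ≤ 1 - t)]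
  exact key_core c κ (c*s) (c*t) E E' E'' hc2 hκ1 hκ2 huv hucl hu1 hu2 hv1 hv2
    hE1 hE2 hE'1 hE'2 hE''1 hE''2

private lemma left_pos' (c κ s t E E' : ℝ) (hc2 : 2 ≤ c) (hc10 : c ≤ 10)
    (hκ1 : 1/2 ≤ κ) (hκ2 : κ ≤ 3/2) (hst : s^2 + t^2 = 1) (ht : 0 < t)
    (h0 : κ + c*s + E = 0)
    (hE1 : -(1/100) ≤ E) (hE2 : E ≤ 1/100)
    (hE'1 : -(1/100) ≤ E') (hE'2 : E' ≤ 1/100) : 0 < c*t + E' := by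
  have hct : 0 < c*t := mul_pos (by linarith) ht
  have ht2 : t ≤ 1 := by nlinarith [sq_nonneg s]
  have hsq : (c*t)^2 = c^2 - (κ + E)^2 := by
    have h : c*s = -(κ + E) := by linarith
    nlinarith [h]
  have h171 : (17/10 : ℝ) ≤ (c*t)^2 := by nlinarith
  have h10 : c*t ≤ 10 := by nlinarith
  nlinarith [mul_nonneg hct.le (by linarith : (0:ℝ) ≤ 10 - c*t)]

private lemma right_neg' (c κ s t E E' : ℝ) (hc2 : 2 ≤ c) (hc10 : c ≤ 10)
    (hκ1 : 1/2 ≤ κ) (hκ2 : κ ≤ 3/2) (hst : s^2 + t^2 = 1) (ht : t < 0)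
    (h0 : κ + c*s + E = 0)
    (hE1 : -(1/100) ≤ E) (hE2 : E ≤ 1/100)
    (hE'1 : -(1/100) ≤ E') (hE'2 : E' ≤ 1/100) : c*t + E' < 0 := by
  have hct : c*t < 0 := mul_neg_of_pos_of_neg (by linarith) ht
  have ht2 : -1 ≤ t := by nlinarith [sq_nonneg s]
  have hsq : (c*t)^2 = c^2 - (κ + E)^2 := by
    have h : c*s = -(κ + E) := by linarith
    nlinarith [h]
  have h171 : (17/10 : ℝ) ≤ (c*t)^2 := by nlinarith
  have h10 : -10 ≤ c*t := by nlinarith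
  nlinarith [mul_nonneg (by linarith : (0:ℝ) ≤ -(c*t)) (by linarith : (0:ℝ) ≤ 10 + c*t)]

/-- Convexity of g on (θ_l, θ_r), blow-up of g′ at both ends, and the unique
critical point θ_c of the angular component g of the return map. -/
theorem stmt5 (c d κ a : ℝ) (hc : c ∈ Set.Icc (2:ℝ) 10) (hd : 100 ≤ d)
    (hκ : κ ∈ Set.Icc (1/2 : ℝ) (3/2)) (e : ℝ → ℝ) (he : ContDiff ℝ 2 e)
    (hbd : ∀ θ, |e θ| + |deriv e θ| + |deriv (deriv e) θ| ≤ 1/100)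
    (F g : ℝ → ℝ) (hF : F = fun θ => κ + c * Real.sin θ + e θ)
    (hg : g = fun θ => θ + a - d * Real.log (F θ))
    (θl θr : ℝ)
    (hθl : θl ∈ Set.Ioo (-(Real.pi/2)) 0) (hθr : θr ∈ Set.Ioo Real.pi (3 * Real.pi / 2))
    (hFl : F θl = 0) (hFr : F θr = 0)
    (hluniq : ∀ θ ∈ Set.Ioo (-(Real.pi/2)) (Real.pi/2), F θ = 0 → θ = θl)
    (hruniq : ∀ θ ∈ Set.Ioo (Real.pi/2) (3 * Real.pi / 2), F θ = 0 → θ = θr)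
    (hFpos : ∀ θ ∈ Set.Ioo θl θr, 0 < F θ) :
    (∀ θ ∈ Set.Ioo θl θr, 0 < deriv (deriv g) θ) ∧
    Tendsto (deriv g) (nhdsWithin θl (Set.Ioi θl)) atBot ∧
    Tendsto (deriv g) (nhdsWithin θr (Set.Iio θr)) atTop ∧
    (∃! θc : ℝ, θc ∈ Set.Ioo θl θr ∧ deriv g θc = 0) := by
  obtain ⟨hc2, hc10⟩ := hc
  obtain ⟨hκ1, hκ2⟩ := hκ
  obtain ⟨hθl1, hθl2⟩ := hθl
  obtain ⟨hθr1, hθr2⟩ := hθr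
  have hπ := Real.pi_gt_three
  have hlr : θl < θr := by linarith
  have hd0 : (0:ℝ) < d := by linarith
  -- bounds on e and its derivatives
  have hE : ∀ θ, -(1/100 : ℝ) ≤ e θ ∧ e θ ≤ 1/100 := fun θ => by
    have h := hbd θ
    have h1 := abs_nonneg (deriv e θ); have h2 := abs_nonneg (deriv (deriv e) θ)
    exact abs_le.mp (by linarith)
  have hE' : ∀ θ, -(1/100 : ℝ) ≤ deriv e θ ∧ deriv e θ ≤ 1/100 := fun θ => by
    have h := hbd θ
    have h1 := abs_nonneg (e θ); have h2 := abs_nonneg (deriv (deriv e) θ)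
    exact abs_le.mp (by linarith)
  have hE'' : ∀ θ, -(1/100 : ℝ) ≤ deriv (deriv e) θ ∧ deriv (deriv e) θ ≤ 1/100 := fun θ => by
    have h := hbd θ
    have h1 := abs_nonneg (e θ); have h2 := abs_nonneg (deriv e θ)
    exact abs_le.mp (by linarith)
  -- differentiability of e
  have h2 : ContDiff ℝ ((1:WithTop ℕ∞)+1) e := by norm_num at he ⊢; exact he
  have hh := contDiff_succ_iff_deriv.mp h2
  have hde : Differentiable ℝ e := hh.1
  have hde' : Differentiable ℝ (deriv e) := hh.2.2.differentiable one_ne_zero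
  obtain ⟨F', hF'def⟩ : ∃ F' : ℝ → ℝ, F' = fun θ => c * Real.cos θ + deriv e θ := ⟨_, rfl⟩
  obtain ⟨F'', hF''def⟩ : ∃ F'' : ℝ → ℝ,
      F'' = fun θ => -(c * Real.sin θ) + deriv (deriv e) θ := ⟨_, rfl⟩
  have hFd : ∀ θ, HasDerivAt F (F' θ) θ := by
    intro θ
    rw [hF, hF'def]
    exact (((Real.hasDerivAt_sin θ).const_mul c).const_add κ).add (hde θ).hasDerivAt
  have hF'd : ∀ θ, HasDerivAt F' (F'' θ) θ := by
    intro θ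
    rw [hF'def, hF''def]
    exact (((Real.hasDerivAt_cos θ).const_mul c).add (hde' θ).hasDerivAt).congr_deriv (by ring)
  have hcF : Continuous F := by
    rw [hF]
    exact (continuous_const.add (continuous_const.mul Real.continuous_sin)).add hde.continuous
  have hcF' : Continuous F' := by
    rw [hF'def]
    exact (continuous_const.mul Real.continuous_cos).add hh.2.2.continuous
  -- first derivative of g
  have hgd : ∀ θ, F θ ≠ 0 → HasDerivAt g (1 - d * (F' θ / F θ)) θ := by
    intro θ hne
    rw [hg]
    exact ((hasDerivAt_id θ).add_const a).sub (((hFd θ).log hne).const_mul d)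
  have hg'eq : ∀ θ ∈ Set.Ioo θl θr, deriv g θ = 1 - d * (F' θ / F θ) := fun θ hθ =>
    (hgd θ (ne_of_gt (hFpos θ hθ))).deriv
  -- second derivative of g
  have hGd : ∀ θ, F θ ≠ 0 →
      HasDerivAt (fun x => 1 - d * (F' x / F x))
        (-(d * ((F'' θ * F θ - F' θ * F' θ) / F θ ^ 2))) θ := by
    intro θ hne
    exact (((hF'd θ).div (hFd θ) hne).const_mul d).const_sub 1
  have hg''eq : ∀ θ ∈ Set.Ioo θl θr,
      deriv (deriv g) θ = -(d * ((F'' θ * F θ - F' θ * F' θ) / F θ ^ 2)) := by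
    intro θ hθ
    have hev : deriv g =ᶠ[nhds θ] fun x => 1 - d * (F' x / F x) :=
      Filter.eventuallyEq_of_mem (isOpen_Ioo.mem_nhds hθ) fun x hx => hg'eq x hx
    rw [hev.deriv_eq]
    exact (hGd θ (ne_of_gt (hFpos θ hθ))).deriv
  -- key inequality
  have key : ∀ θ, 1/2 ≤ F' θ * F' θ - F θ * F'' θ := by
    intro θ
    have hst : Real.sin θ ^ 2 + Real.cos θ ^ 2 = 1 := Real.sin_sq_add_cos_sq θ
    have := key_ineq c κ (Real.sin θ) (Real.cos θ) (e θ) (deriv e θ) (deriv (deriv e) θ)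
      hc2 hc10 hκ1 hκ2 hst (Real.neg_one_le_sin θ) (Real.sin_le_one θ)
      (Real.neg_one_le_cos θ) (Real.cos_le_one θ)
      (hE θ).1 (hE θ).2 (hE' θ).1 (hE' θ).2 (hE'' θ).1 (hE'' θ).2
    rw [hF, hF'def, hF''def]
    simpa using this
  -- positivity of second derivative
  have hg''pos : ∀ θ ∈ Set.Ioo θl θr, 0 < deriv (deriv g) θ := by
    intro θ hθ
    rw [hg''eq θ hθ]
    have h1 := key θ
    have h2 := hFpos θ hθ
    have hcomm : F'' θ * F θ = F θ * F'' θ := mul_comm _ _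
    have hneg : F'' θ * F θ - F' θ * F' θ < 0 := by linarith
    have : d * ((F'' θ * F θ - F' θ * F' θ) / F θ ^ 2) < 0 :=
      mul_neg_of_pos_of_neg hd0 (div_neg_of_neg_of_pos hneg (by positivity))
    linarith
  -- endpoint derivative signs
  have hF'l : 0 < F' θl := by
    have hsincos := Real.sin_sq_add_cos_sq θl
    have hcos : 0 < Real.cos θl := Real.cos_pos_of_mem_Ioo ⟨hθl1, by linarith⟩
    have h0 : κ + c * Real.sin θl + e θl = 0 := by rw [hF] at hFl; exact hFl
    rw [hF'def]
    exact left_pos' c κ (Real.sin θl) (Real.cos θl) (e θl) (deriv e θl)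
      hc2 hc10 hκ1 hκ2 hsincos hcos h0 (hE θl).1 (hE θl).2 (hE' θl).1 (hE' θl).2
  have hF'r : F' θr < 0 := by
    have hsincos := Real.sin_sq_add_cos_sq θr
    have hcos : Real.cos θr < 0 :=
      Real.cos_neg_of_pi_div_two_lt_of_lt (by linarith) (by linarith)
    have h0 : κ + c * Real.sin θr + e θr = 0 := by rw [hF] at hFr; exact hFr
    rw [hF'def]
    exact right_neg' c κ (Real.sin θr) (Real.cos θr) (e θr) (deriv e θr)
      hc2 hc10 hκ1 hκ2 hsincos hcos h0 (hE θr).1 (hE θr).2 (hE' θr).1 (hE' θr).2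
  -- tendsto at θl
  have hmemIoo : Set.Ioo θl θr ∈ nhdsWithin θl (Set.Ioi θl) :=
    Ioo_mem_nhdsGT_of_mem ⟨le_refl θl, hlr⟩
  have hFtoL : Tendsto F (nhdsWithin θl (Set.Ioi θl)) (nhdsWithin 0 (Set.Ioi 0)) := by
    rw [tendsto_nhdsWithin_iff]
    constructor
    · have h := hcF.tendsto θl
      rw [hFl] at h
      exact h.mono_left nhdsWithin_le_nhds
    · filter_upwards [hmemIoo] with x hx using hFpos x hx
  have hF'toL : Tendsto F' (nhdsWithin θl (Set.Ioi θl)) (nhds (F' θl)) :=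
    (hcF'.tendsto θl).mono_left nhdsWithin_le_nhds
  have hdivL : Tendsto (fun θ => F' θ * (F θ)⁻¹) (nhdsWithin θl (Set.Ioi θl)) atTop :=
    hF'toL.pos_mul_atTop hF'l hFtoL.inv_tendsto_nhdsGT_zero
  have htendL : Tendsto (deriv g) (nhdsWithin θl (Set.Ioi θl)) atBot := by
    have h1 : Tendsto (fun θ => d * (F' θ / F θ)) (nhdsWithin θl (Set.Ioi θl)) atTop := by
      simpa [div_eq_mul_inv] using hdivL.const_mul_atTop hd0
    have h2 : Tendsto (fun θ => 1 - d * (F' θ / F θ)) (nhdsWithin θl (Set.Ioi θl)) atBot := by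
      have h3 := tendsto_neg_atTop_atBot.comp h1
      have h4 := tendsto_atBot_add_const_left (nhdsWithin θl (Set.Ioi θl)) (1:ℝ) h3
      simpa [Function.comp, sub_eq_add_neg] using h4
    exact h2.congr' (Filter.eventuallyEq_of_mem hmemIoo fun x hx => (hg'eq x hx).symm)
  -- tendsto at θr
  have hmemIoo' : Set.Ioo θl θr ∈ nhdsWithin θr (Set.Iio θr) :=
    Ioo_mem_nhdsLT_of_mem ⟨hlr, le_refl θr⟩
  have hFtoR : Tendsto F (nhdsWithin θr (Set.Iio θr)) (nhdsWithin 0 (Set.Ioi 0)) := by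
    rw [tendsto_nhdsWithin_iff]
    constructor
    · have h := hcF.tendsto θr
      rw [hFr] at h
      exact h.mono_left nhdsWithin_le_nhds
    · filter_upwards [hmemIoo'] with x hx using hFpos x hx
  have hF'toR : Tendsto F' (nhdsWithin θr (Set.Iio θr)) (nhds (F' θr)) :=
    (hcF'.tendsto θr).mono_left nhdsWithin_le_nhds
  have hdivR : Tendsto (fun θ => F' θ * (F θ)⁻¹) (nhdsWithin θr (Set.Iio θr)) atBot :=
    hF'toR.neg_mul_atTop hF'r hFtoR.inv_tendsto_nhdsGT_zero
  have htendR : Tendsto (deriv g) (nhdsWithin θr (Set.Iio θr)) atTop := by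
    have h1 : Tendsto (fun θ => d * (F' θ / F θ)) (nhdsWithin θr (Set.Iio θr)) atBot := by
      simpa [div_eq_mul_inv] using hdivR.const_mul_atBot hd0
    have h2 : Tendsto (fun θ => 1 - d * (F' θ / F θ)) (nhdsWithin θr (Set.Iio θr)) atTop := by
      have h3 := tendsto_neg_atBot_atTop.comp h1
      have h4 := tendsto_atTop_add_const_left (nhdsWithin θr (Set.Iio θr)) (1:ℝ) h3
      simpa [Function.comp, sub_eq_add_neg] using h4
    exact h2.congr' (Filter.eventuallyEq_of_mem hmemIoo' fun x hx => (hg'eq x hx).symm)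
  -- continuity and strict monotonicity of deriv g on Ioo
  have hcontG : ContinuousOn (fun x => 1 - d * (F' x / F x)) (Set.Ioo θl θr) :=
    continuousOn_const.sub (continuousOn_const.mul
      (hcF'.continuousOn.div hcF.continuousOn fun x hx => (hFpos x hx).ne'))
  have hcont : ContinuousOn (deriv g) (Set.Ioo θl θr) :=
    hcontG.congr fun x hx => hg'eq x hx
  have hmono : StrictMonoOn (deriv g) (Set.Ioo θl θr) :=
    strictMonoOn_of_deriv_pos (convex_Ioo θl θr) hcont
      (by rw [interior_Ioo]; exact hg''pos)
  -- existence of a critical point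
  have hneL : (nhdsWithin θl (Set.Ioi θl)).NeBot := nhdsGT_neBot θl
  have hneR : (nhdsWithin θr (Set.Iio θr)).NeBot := nhdsLT_neBot θr
  obtain ⟨x₁, hx₁Ioo, hx₁neg⟩ : ∃ x, x ∈ Set.Ioo θl θr ∧ deriv g x < 0 := by
    have h1 : ∀ᶠ x in nhdsWithin θl (Set.Ioi θl), deriv g x < 0 :=
      htendL.eventually (eventually_lt_atBot 0)
    exact ((Filter.eventually_iff_exists_mem.mpr ⟨_, hmemIoo, fun x hx => hx⟩).and h1).exists
  obtain ⟨x₂, hx₂Ioo, hx₂pos⟩ : ∃ x, x ∈ Set.Ioo θl θr ∧ 0 < deriv g x := by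
    have h1 : ∀ᶠ x in nhdsWithin θr (Set.Iio θr), 0 < deriv g x :=
      htendR.eventually (eventually_gt_atTop 0)
    exact ((Filter.eventually_iff_exists_mem.mpr ⟨_, hmemIoo', fun x hx => hx⟩).and h1).exists
  have hx12 : x₁ < x₂ := by
    rcases lt_trichotomy x₁ x₂ with h | h | h
    · exact h
    · exfalso; rw [h] at hx₁neg; linarith
    · exfalso; have := hmono hx₂Ioo hx₁Ioo h; linarith
  have hIcc : Set.Icc x₁ x₂ ⊆ Set.Ioo θl θr := fun z hz =>
    ⟨lt_of_lt_of_le hx₁Ioo.1 hz.1, lt_of_le_of_lt hz.2 hx₂Ioo.2⟩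
  obtain ⟨θc, hθcmem, hθceq⟩ :=
    intermediate_value_Icc hx12.le (hcont.mono hIcc) ⟨hx₁neg.le, hx₂pos.le⟩
  refine ⟨hg''pos, htendL, htendR, θc, ⟨hIcc hθcmem, hθceq⟩, ?_⟩
  rintro y ⟨hyIoo, hy0⟩
  rcases lt_trichotomy y θc with h | h | h
  · exfalso
    have := hmono hyIoo (hIcc hθcmem) h
    rw [hy0, hθceq] at this
    exact lt_irrefl 0 this
  · exact h
  · exfalso
    have := hmono (hIcc hθcmem) hyIoo h
    rw [hy0, hθceq] at this
    exact lt_irrefl 0 this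
end

section
/- Let θ_l ∈ (−π/2, 0) and θ_r ∈ (π, 3π/2) be the unique zeros of F in (−π/2, π/2) and (π/2, 3π/2) respectively, so that F > 0 on (θ_l, θ_r). Then for every θ ∈ (θ_l, θ_r), if |g′(θ)| ≤ 2 then |cos θ| ≤ 6/d + 1/100. -/
/-- Bound on |cos θ| in the fold region where the angular derivative of the
return map is small: if |g′(θ)| ≤ 2 then |cos θ| ≤ 6/d + 1/100. -/
theorem stmt6 (c d κ a : ℝ) (hc : c ∈ Set.Icc (2:ℝ) 10) (hd : 100 ≤ d)
    (hκ : κ ∈ Set.Icc (1/2 : ℝ) (3/2)) (e : ℝ → ℝ) (he : ContDiff ℝ 2 e)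
    (hbd : ∀ θ, |e θ| + |deriv e θ| + |deriv (deriv e) θ| ≤ 1/100)
    (F g : ℝ → ℝ) (hF : F = fun θ => κ + c * Real.sin θ + e θ)
    (hg : g = fun θ => θ + a - d * Real.log (F θ))
    (θl θr : ℝ)
    (hθl : θl ∈ Set.Ioo (-(Real.pi/2)) 0) (hθr : θr ∈ Set.Ioo Real.pi (3 * Real.pi / 2))
    (hFl : F θl = 0) (hFr : F θr = 0)
    (hluniq : ∀ θ ∈ Set.Ioo (-(Real.pi/2)) (Real.pi/2), F θ = 0 → θ = θl)
    (hruniq : ∀ θ ∈ Set.Ioo (Real.pi/2) (3 * Real.pi / 2), F θ = 0 → θ = θr)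
    (hFpos : ∀ θ ∈ Set.Ioo θl θr, 0 < F θ) :
    ∀ θ ∈ Set.Ioo θl θr, |deriv g θ| ≤ 2 → |Real.cos θ| ≤ 6 / d + 1/100 := by
  intro θ hθ hg'
  obtain ⟨hc1, hc2⟩ := hc
  obtain ⟨hκ1, hκ2⟩ := hκ
  have hdpos : (0:ℝ) < d := by linarith
  have hFθ : 0 < F θ := hFpos θ hθ
  have hFne : F θ ≠ 0 := ne_of_gt hFθ
  have hed : DifferentiableAt ℝ e θ :=
    (he.differentiable (by norm_num)).differentiableAt
  have hFd : HasDerivAt F (c * Real.cos θ + deriv e θ) θ := by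
    rw [hF]
    exact (((Real.hasDerivAt_sin θ).const_mul c).const_add κ).add hed.hasDerivAt
  have hgd : HasDerivAt g (1 - d * ((c * Real.cos θ + deriv e θ) / F θ)) θ := by
    rw [hg]
    exact ((hasDerivAt_id θ).add_const a).sub ((hFd.log hFne).const_mul d)
  rw [hgd.deriv] at hg'
  have hbθ := hbd θ
  have h1 : |e θ| ≤ 1/100 := by
    have := abs_nonneg (deriv e θ); have := abs_nonneg (deriv (deriv e) θ); linarith
  have h2 : |deriv e θ| ≤ 1/100 := by
    have := abs_nonneg (e θ); have := abs_nonneg (deriv (deriv e) θ); linarith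
  set q : ℝ := (c * Real.cos θ + deriv e θ) / F θ with hq
  have hq3 : |d * q| ≤ 3 := by
    rw [abs_le] at hg' ⊢
    constructor <;> linarith [hg'.1, hg'.2]
  -- |c cos θ + e'| * d ≤ 3 * F θ
  have habs : |d * q| = d * (|c * Real.cos θ + deriv e θ| / F θ) := by
    rw [abs_mul, abs_of_pos hdpos, hq, abs_div, abs_of_pos hFθ]
  rw [habs] at hq3
  set N := |c * Real.cos θ + deriv e θ| with hN
  have hNnn : 0 ≤ N := abs_nonneg _
  have hnum : N * d ≤ 3 * F θ := by
    have h5 : N / F θ ≤ 3 / d := by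
      rw [le_div_iff₀ hdpos]; nlinarith
    rw [div_le_div_iff₀ hFθ hdpos] at h5; linarith
  have hcc : c * |Real.cos θ| ≤ N + 1/100 := by
    have h4 : |c * Real.cos θ| ≤ N + |deriv e θ| := by
      rw [hN]
      have := abs_add_le (c * Real.cos θ + deriv e θ) (-(deriv e θ))
      simpa using this
    rw [abs_mul, abs_of_nonneg (by linarith : (0:ℝ) ≤ c)] at h4
    linarith
  have hFub : F θ ≤ 3/2 + c + 1/100 := by
    rw [hF]
    have hs : Real.sin θ ≤ 1 := Real.sin_le_one θ
    have he1 : e θ ≤ 1/100 := (abs_le.mp h1).2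
    nlinarith
  have hx : 0 ≤ |Real.cos θ| := abs_nonneg _
  rw [div_add' _ _ _ (ne_of_gt hdpos), le_div_iff₀ hdpos]
  nlinarith [mul_le_mul_of_nonneg_right hcc hdpos.le, hc1, hd, hx,
    mul_nonneg hx hdpos.le]
end

section
/- Let (θ, z) ∈ V and suppose that either (Case 1) F(θ,z) ≥ √k and |1 − d·F_θ(θ,z)/F(θ,z)| ≥ 2, or (Case 2) F(θ,z) < √k. Then for every vector (u, v) ∈ ℝ² with u ≠ 0 and |v/u| ≤ 1/100, the image (u₁, v₁) = DT(θ,z)·(u, v) satisfies u₁ ≠ 0 and |v₁/u₁| ≤ 1/100. (That is, the differential of T maps the horizontal cone of slopes at most 1/100 into itself at every point outside the fold region.) -/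
private lemma kaux1 (d sk : ℝ) (h0 : 0 ≤ sk) (hd : 100 ≤ d) (hdk : d*sk ≤ 1/100) :
    sk ≤ 1/10000 := by nlinarith

private lemma kaux2 (k sk : ℝ) (h0 : 0 ≤ sk) (h1 : sk ≤ 1/10000) (h2 : sk*sk = k) :
    k ≤ 1/10^8 := by nlinarith

private lemma kaux_abs (x r : ℝ) (hr : 0 ≤ r) (h : r^2 ≤ x^2) : r ≤ |x| := by
  nlinarith [sq_abs x, abs_nonneg x]

private lemma kaux_abs' (x r : ℝ) (hr : 0 ≤ r) (h : x^2 ≤ r^2) : |x| ≤ r := by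
  nlinarith [sq_abs x, abs_nonneg x]

private lemma kaux_cos (c s co : ℝ) (hc2 : 2 ≤ c)
    (h1 : c*s ≤ -1 + 1/40) (h2 : -1 - 1/40 ≤ c*s) (hsc : s^2 + co^2 = 1) :
    289/400 ≤ co^2 := by
  nlinarith [mul_nonneg (show (0:ℝ) ≤ c*s + 41/40 by linarith)
      (show (0:ℝ) ≤ -(c*s) by linarith),
    mul_nonneg (show (0:ℝ) ≤ c^2 - 4 by nlinarith) (sq_nonneg s)]

private lemma kaux_mul (a b a' b' : ℝ) (h1 : |a| ≤ a') (h2 : |b| ≤ b') :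
    |a*b| ≤ a'*b' := by
  rw [abs_mul]
  exact mul_le_mul h1 h2 (abs_nonneg b) ((abs_nonneg a).trans h1)

private lemma kaux_Ble (d k Ez Fv sk : ℝ) (hd : 100 ≤ d) (hk0 : 0 ≤ sk)
    (hksq : sk*sk = k) (hdk : d*sk ≤ 1/100) (hge : sk ≤ Fv) (hEz : Ez ≤ k/2) :
    d*(k+Ez) ≤ (3/200)*Fv := by
  nlinarith [mul_le_mul_of_nonneg_right hdk hk0, (show (0:ℝ) < d by linarith)]

private lemma kaux_W (k u1 : ℝ) (hk0 : 0 ≤ k) (hk8 : k ≤ 1/2) (hu : 0 ≤ u1) :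
    (3*k/2)*(u1/100) ≤ u1/100 := by nlinarith

private lemma kaux_h2 (d Fv u1 W1 : ℝ) (hd : 100 ≤ d) (hFv : Fv ≤ 12)
    (hu : 0 ≤ u1) (hW : (16/10)*u1 ≤ W1) : 2*u1*Fv ≤ d*W1 := by nlinarith

set_option maxHeartbeats 1000000 in
private lemma konekey (d γ c k b Fv Eθ Ez Ev s co z u v : ℝ)
    (hd : 100 ≤ d) (hγ : 1 < γ) (hc2 : 2 ≤ c) (hc10 : c ≤ 10)
    (hk : 0 < k) (hb : 0 < b)
    (hdk : d * Real.sqrt k ≤ 1/100)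
    (hγb : γ * b * (12:ℝ) ^ γ ≤ 1/10000)
    (hEθ : |Eθ| ≤ 1/50) (hEz : |Ez| ≤ k/2) (hEv : |Ev| ≤ 1/50)
    (hFveq : Fv = 1 + c*s + k*z + Ev)
    (hz1 : -1 ≤ z) (hz2 : z ≤ 1)
    (hsc : s^2 + co^2 = 1) (hs1 : -1 ≤ s) (hs2 : s ≤ 1)
    (hFpos : 0 < Fv)
    (hcase : (Real.sqrt k ≤ Fv ∧ 2 ≤ |1 - d*(c*co+Eθ)/Fv|) ∨ Fv < Real.sqrt k)
    (hu : u ≠ 0) (hv : |v/u| ≤ 1/100) :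
    (1 - d*((c*co+Eθ)/Fv))*u + (-(d*((k+Ez)/Fv)))*v ≠ 0 ∧
    |(b*((c*co+Eθ)*γ*Fv^(γ-1))*u + b*((k+Ez)*γ*Fv^(γ-1))*v) /
      ((1 - d*((c*co+Eθ)/Fv))*u + (-(d*((k+Ez)/Fv)))*v)| ≤ 1/100 := by
  have hu' : (0:ℝ) < |u| := abs_pos.mpr hu
  have hd0 : (0:ℝ) < d := by linarith
  have hvu : |v| ≤ |u|/100 := by
    rw [abs_div, div_le_iff₀ hu'] at hv; linarith
  have hsk0 : 0 ≤ Real.sqrt k := Real.sqrt_nonneg k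
  have hksq : Real.sqrt k * Real.sqrt k = k := Real.mul_self_sqrt hk.le
  have hsk : Real.sqrt k ≤ 1/10000 := kaux1 d _ hsk0 hd hdk
  have hk8 : k ≤ 1/10^8 := kaux2 k _ hsk0 hsk hksq
  have hEθ' := abs_le.mp hEθ
  have hEz' := abs_le.mp hEz
  have hEv' := abs_le.mp hEv
  have hcoabs : |co| ≤ 1 := kaux_abs' co 1 (by norm_num) (by nlinarith [sq_nonneg s])
  have hcsabs : |c*s| ≤ 10 := by
    have := kaux_mul c s 10 1
      (by rw [abs_of_pos (by linarith)]; exact hc10) (abs_le.mpr ⟨hs1, hs2⟩)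
    linarith
  have hkzabs : |k*z| ≤ k := by
    have := kaux_mul k z k 1 (by rw [abs_of_pos hk]) (abs_le.mpr ⟨hz1, hz2⟩)
    linarith [this]
  have hcs' := abs_le.mp hcsabs
  have hkz' := abs_le.mp hkzabs
  have hFub : Fv ≤ 12 := by rw [hFveq]; linarith
  have hFθub : |c*co + Eθ| ≤ 11 := by
    have h1 : |c*co + Eθ| ≤ |c*co| + |Eθ| := abs_add_le _ _
    have h2 : |c*co| ≤ 10 := by
      have := kaux_mul c co 10 1
        (by rw [abs_of_pos (by linarith)]; exact hc10) hcoabs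
      linarith
    linarith
  have hFzabs : |k + Ez| ≤ 3*k/2 := by
    rw [abs_of_pos (by linarith)]; linarith
  have hFθu : |(c*co+Eθ)*u| ≤ 11*|u| := kaux_mul _ u 11 |u| hFθub le_rfl
  have hFzv : |(k+Ez)*v| ≤ (3*k/2)*(|u|/100) := by
    rw [abs_mul]
    exact mul_le_mul hFzabs hvu (abs_nonneg v) (by positivity)
  have hWub : |(c*co+Eθ)*u + (k+Ez)*v| ≤ 12*|u| := by
    have h1 := abs_add_le ((c*co+Eθ)*u) ((k+Ez)*v)
    have h2 := kaux_W k |u| hk.le (by linarith) (abs_nonneg u)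
    linarith
  -- key lower bound on |u₁|
  have hkey : |u| ≤ |(1 - d*((c*co+Eθ)/Fv))*u + (-(d*((k+Ez)/Fv)))*v| := by
    rcases hcase with ⟨hge, habs⟩ | hlt
    · -- Case 1
      have hAeq : 1 - d*(c*co+Eθ)/Fv = 1 - d*((c*co+Eθ)/Fv) := by rw [mul_div_assoc]
      rw [hAeq] at habs
      have hAu : 2*|u| ≤ |(1 - d*((c*co+Eθ)/Fv))*u| := by
        rw [abs_mul]
        exact mul_le_mul_of_nonneg_right habs (abs_nonneg u)
      have hBle : d*((k+Ez)/Fv) ≤ 3/200 := by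
        rw [← mul_div_assoc, div_le_iff₀ hFpos]
        exact kaux_Ble d k Ez Fv _ hd hsk0 hksq hdk hge hEz'.2
      have hBnn : (0:ℝ) ≤ d*((k+Ez)/Fv) :=
        mul_nonneg hd0.le (div_nonneg (by linarith) hFpos.le)
      have hBv : |(-(d*((k+Ez)/Fv)))*v| ≤ (3/200)*(|u|/100) := by
        rw [abs_mul, abs_neg, abs_of_nonneg hBnn]
        exact mul_le_mul hBle hvu (abs_nonneg v) (by norm_num)
      have htri := abs_sub_abs_le_abs_sub ((1 - d*((c*co+Eθ)/Fv))*u)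
        (-((-(d*((k+Ez)/Fv)))*v))
      rw [abs_neg, sub_neg_eq_add] at htri
      linarith
    · -- Case 2
      have hFsmall : Fv < 1/10000 := lt_of_lt_of_le hlt hsk
      have hcs1 : c*s ≤ -1 + 1/40 := by
        have : c*s = Fv - 1 - k*z - Ev := by rw [hFveq]; ring
        rw [this]; linarith
      have hcs2 : -1 - 1/40 ≤ c*s := by
        have : c*s = Fv - 1 - k*z - Ev := by rw [hFveq]; ring
        rw [this]; linarith
      have hcosq : 289/400 ≤ co^2 := kaux_cos c s co hc2 hcs1 hcs2 hsc
      have hco85 : 17/20 ≤ |co| := kaux_abs co (17/20) (by norm_num)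
        (by rw [show ((17:ℝ)/20)^2 = 289/400 by norm_num]; exact hcosq)
      have hFθlb : 168/100 ≤ |c*co + Eθ| := by
        have h1 := abs_sub_abs_le_abs_sub (c*co) (-Eθ)
        rw [abs_neg, sub_neg_eq_add] at h1
        have h2 : |c*co| = c*|co| := by
          rw [abs_mul, abs_of_pos (by linarith : (0:ℝ) < c)]
        have h3 : 2*(17/20) ≤ c*|co| :=
          mul_le_mul hc2 hco85 (by norm_num) (by linarith)
        linarith
      have hWlb : (16/10)*|u| ≤ |(c*co+Eθ)*u + (k+Ez)*v| := by
        have h1 := abs_sub_abs_le_abs_sub ((c*co+Eθ)*u) (-((k+Ez)*v))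
        rw [abs_neg, sub_neg_eq_add] at h1
        have h2 : (168/100)*|u| ≤ |(c*co+Eθ)*u| := by
          rw [abs_mul]
          exact mul_le_mul_of_nonneg_right hFθlb (abs_nonneg u)
        have h3 := kaux_W k |u| hk.le (by linarith) (abs_nonneg u)
        linarith
      have hid : (1 - d*((c*co+Eθ)/Fv))*u + (-(d*((k+Ez)/Fv)))*v
          = u - (d/Fv)*((c*co+Eθ)*u + (k+Ez)*v) := by
        field_simp; ring
      have h2 : 2*|u| ≤ (d/Fv)*|(c*co+Eθ)*u + (k+Ez)*v| := by
        rw [div_mul_eq_mul_div, le_div_iff₀ hFpos]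
        have := kaux_h2 d Fv |u| _ hd hFub (abs_nonneg u) hWlb
        linarith
      have htri : (d/Fv)*|(c*co+Eθ)*u + (k+Ez)*v| ≤
          |(1 - d*((c*co+Eθ)/Fv))*u + (-(d*((k+Ez)/Fv)))*v| + |u| := by
        have habs : (d/Fv)*|(c*co+Eθ)*u + (k+Ez)*v|
            = |(d/Fv)*((c*co+Eθ)*u + (k+Ez)*v)| := by
          rw [abs_mul, abs_of_pos (div_pos hd0 hFpos)]
        have h4 := abs_sub_abs_le_abs_sub ((d/Fv)*((c*co+Eθ)*u + (k+Ez)*v)) u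
        rw [abs_sub_comm, ← hid] at h4
        rw [habs]
        linarith
      linarith
  have hune : (1 - d*((c*co+Eθ)/Fv))*u + (-(d*((k+Ez)/Fv)))*v ≠ 0 :=
    abs_pos.mp (lt_of_lt_of_le hu' hkey)
  refine ⟨hune, ?_⟩
  have hP : (0:ℝ) < Fv^(γ-1) := Real.rpow_pos_of_pos hFpos _
  have hQ : Fv^(γ-1) ≤ (12:ℝ)^(γ-1) :=
    Real.rpow_le_rpow hFpos.le hFub (by linarith)
  have hγb' : γ * b * ((12:ℝ)^(γ-1) * 12) ≤ 1/10000 := by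
    have h12 : (12:ℝ)^(γ-1) = (12:ℝ)^γ / 12 := by
      rw [Real.rpow_sub (by norm_num : (0:ℝ) < 12), Real.rpow_one]
    rw [h12, div_mul_cancel₀ _ (by norm_num : (12:ℝ) ≠ 0)]
    exact hγb
  have hvid : b*((c*co+Eθ)*γ*Fv^(γ-1))*u + b*((k+Ez)*γ*Fv^(γ-1))*v
      = (b*γ*Fv^(γ-1)) * ((c*co+Eθ)*u + (k+Ez)*v) := by ring
  have hbγP : (0:ℝ) < b*γ*Fv^(γ-1) := mul_pos (mul_pos hb (by linarith)) hP
  have hvb : |b*((c*co+Eθ)*γ*Fv^(γ-1))*u + b*((k+Ez)*γ*Fv^(γ-1))*v| ≤ (1/10000)*|u| := by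
    rw [hvid, abs_mul, abs_of_pos hbγP]
    calc b*γ*Fv^(γ-1) * |(c*co+Eθ)*u + (k+Ez)*v|
        ≤ b*γ*Fv^(γ-1) * (12*|u|) :=
          mul_le_mul_of_nonneg_left hWub hbγP.le
      _ ≤ b*γ*(12:ℝ)^(γ-1) * (12*|u|) := by
          have h5 : b*γ*Fv^(γ-1) ≤ b*γ*(12:ℝ)^(γ-1) :=
            mul_le_mul_of_nonneg_left hQ (by positivity)
          exact mul_le_mul_of_nonneg_right h5 (by positivity)
      _ = (γ * b * ((12:ℝ)^(γ-1) * 12)) * |u| := by ring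
      _ ≤ (1/10000)*|u| := mul_le_mul_of_nonneg_right hγb' (abs_nonneg u)
  rw [abs_div, div_le_iff₀ (lt_of_lt_of_le hu' hkey)]
  linarith


/-- Horizontal cone invariance for the differential of the infinitely wrapped
horseshoe map T(θ,z) = (θ + a - d ln F(θ,z), b F(θ,z)^γ) outside the fold region. -/
theorem stmt7 (d γ c a k b : ℝ) (E : ℝ → ℝ → ℝ)
    (hd : 100 ≤ d) (hγ : 1 < γ) (hc : c ∈ Set.Icc (2:ℝ) 10)
    (hk : 0 < k) (hb : 0 < b)
    (hdk : d * Real.sqrt k ≤ 1/100)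
    (hγb : γ * b * (12:ℝ) ^ γ ≤ 1/10000)
    (hE : ContDiff ℝ 1 (Function.uncurry E))
    (hEbd : ∀ θ z : ℝ, |E θ z| + |deriv (fun t => E t z) θ| ≤ 1/50 ∧
      |deriv (fun t => E θ t) z| ≤ k/2)
    (F T₁ T₂ : ℝ → ℝ → ℝ)
    (hF : F = fun θ z => 1 + c * Real.sin θ + k * z + E θ z)
    (hT₁ : T₁ = fun θ z => θ + a - d * Real.log (F θ z))
    (hT₂ : T₂ = fun θ z => b * (F θ z) ^ γ)
    (θ z : ℝ) (hz : z ∈ Set.Icc (-1:ℝ) 1) (hFpos : 0 < F θ z)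
    (hcase : (Real.sqrt k ≤ F θ z ∧
        2 ≤ |1 - d * (deriv (fun t => F t z) θ) / F θ z|) ∨ F θ z < Real.sqrt k)
    (u v : ℝ) (hu : u ≠ 0) (hslope : |v / u| ≤ 1/100) :
    deriv (fun t => T₁ t z) θ * u + deriv (fun t => T₁ θ t) z * v ≠ 0 ∧
    |(deriv (fun t => T₂ t z) θ * u + deriv (fun t => T₂ θ t) z * v) /
      (deriv (fun t => T₁ t z) θ * u + deriv (fun t => T₁ θ t) z * v)| ≤ 1/100 := by
  have hEdiff : Differentiable ℝ (Function.uncurry E) := hE.differentiable one_ne_zero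
  have hE1 : DifferentiableAt ℝ (fun t => E t z) θ :=
    by have := (hEdiff (θ, z)).comp θ (differentiableAt_id.prodMk (differentiableAt_const z) :
      DifferentiableAt ℝ (fun t : ℝ => (t, z)) θ); exact this
  have hE2 : DifferentiableAt ℝ (fun t => E θ t) z :=
    (hEdiff (θ, z)).comp z ((differentiableAt_const θ).prodMk differentiableAt_id)
  have hFne : F θ z ≠ 0 := ne_of_gt hFpos
  have hDF1 : HasDerivAt (fun t => F t z) (c * Real.cos θ + deriv (fun t => E t z) θ) θ := by
    rw [hF]
    simpa [Pi.add_def] using (((hasDerivAt_const θ (1:ℝ)).add ((Real.hasDerivAt_sin θ).const_mul c)).add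
      (hasDerivAt_const θ (k*z))).add hE1.hasDerivAt
  have hDF2 : HasDerivAt (fun t => F θ t) (k + deriv (fun t => E θ t) z) z := by
    rw [hF]
    simpa [Pi.add_def] using ((hasDerivAt_const z (1 + c * Real.sin θ)).add
      ((hasDerivAt_id z).const_mul k)).add hE2.hasDerivAt
  have hDT1θ : HasDerivAt (fun t => T₁ t z)
      (1 - d * ((c * Real.cos θ + deriv (fun t => E t z) θ) / F θ z)) θ := by
    rw [hT₁]
    simpa [Pi.sub_def] using ((hasDerivAt_id θ).add_const a).sub ((hDF1.log hFne).const_mul d)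
  have hDT1z : HasDerivAt (fun t => T₁ θ t)
      (-(d * ((k + deriv (fun t => E θ t) z) / F θ z))) z := by
    rw [hT₁]
    simpa [Pi.sub_def] using (hasDerivAt_const z (θ + a)).sub ((hDF2.log hFne).const_mul d)
  have hDT2θ : HasDerivAt (fun t => T₂ t z)
      (b * ((c * Real.cos θ + deriv (fun t => E t z) θ) * γ * F θ z ^ (γ - 1))) θ := by
    rw [hT₂]
    simpa using (hDF1.rpow_const (Or.inl hFne)).const_mul b
  have hDT2z : HasDerivAt (fun t => T₂ θ t)
      (b * ((k + deriv (fun t => E θ t) z) * γ * F θ z ^ (γ - 1))) z := by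
    rw [hT₂]
    simpa using (hDF2.rpow_const (Or.inl hFne)).const_mul b
  rw [hDF1.deriv] at hcase
  rw [hDT1θ.deriv, hDT1z.deriv, hDT2θ.deriv, hDT2z.deriv]
  have hEb := hEbd θ z
  have hE0 : (0:ℝ) ≤ |E θ z| := abs_nonneg _
  have hE0' : (0:ℝ) ≤ |deriv (fun t => E t z) θ| := abs_nonneg _
  exact konekey d γ c k b (F θ z) (deriv (fun t => E t z) θ) (deriv (fun t => E θ t) z)
    (E θ z) (Real.sin θ) (Real.cos θ) z u v hd hγ hc.1 hc.2 hk hb hdk hγb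
    (by linarith [hEb.1]) hEb.2 (by linarith [hEb.1])
    (by rw [hF]) hz.1 hz.2 (Real.sin_sq_add_cos_sq θ)
    (Real.neg_one_le_sin θ) (Real.sin_le_one θ) hFpos hcase hu hslope
end

section
/- At every point of V one has det DT(θ,z) = γ·b·F(θ,z)^{γ−1}·F_z(θ,z) > 0, so DT(θ,z) is invertible. Moreover, if (θ, z) ∈ V satisfies either (Case 1) F(θ,z) ≥ √k and |1 − d·F_θ(θ,z)/F(θ,z)| ≥ 2, or (Case 2) F(θ,z) < √k, then for every nonzero vector (u, v) ∈ ℝ² with |v| ≥ 100·|u|, the preimage (u₋, v₋) = DT(θ,z)⁻¹·(u, v) satisfies |v₋| ≥ 100·|u₋|. (That is, the inverse differential maps the vertical cone into itself at every point outside the fold region.) -/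
set_option maxHeartbeats 1000000 in
/-- Positivity of det DT on V and vertical cone invariance for DT⁻¹ outside the
fold region, for the infinitely wrapped horseshoe map T. -/
theorem stmt8 (d γ c a k b : ℝ) (E : ℝ → ℝ → ℝ)
    (hd : 100 ≤ d) (hγ : 1 < γ) (hc : c ∈ Set.Icc (2:ℝ) 10)
    (hk : 0 < k) (hb : 0 < b)
    (hdk : d * Real.sqrt k ≤ 1/100)
    (hγb : γ * b * (12:ℝ) ^ γ ≤ 1/10000)
    (hE : ContDiff ℝ 1 (Function.uncurry E))
    (hEbd : ∀ θ z : ℝ, |E θ z| + |deriv (fun t => E t z) θ| ≤ 1/50 ∧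
      |deriv (fun t => E θ t) z| ≤ k/2)
    (F T₁ T₂ : ℝ → ℝ → ℝ)
    (hF : F = fun θ z => 1 + c * Real.sin θ + k * z + E θ z)
    (hT₁ : T₁ = fun θ z => θ + a - d * Real.log (F θ z))
    (hT₂ : T₂ = fun θ z => b * (F θ z) ^ γ)
    (A B C D : ℝ → ℝ → ℝ)
    (hA : A = fun θ z => deriv (fun t => T₁ t z) θ)
    (hB : B = fun θ z => deriv (fun t => T₁ θ t) z)
    (hC : C = fun θ z => deriv (fun t => T₂ t z) θ)
    (hD : D = fun θ z => deriv (fun t => T₂ θ t) z) :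
    (∀ θ z : ℝ, z ∈ Set.Icc (-1:ℝ) 1 → 0 < F θ z →
      A θ z * D θ z - B θ z * C θ z
          = γ * b * (F θ z) ^ (γ - 1) * deriv (fun t => F θ t) z ∧
      0 < A θ z * D θ z - B θ z * C θ z) ∧
    (∀ θ z : ℝ, z ∈ Set.Icc (-1:ℝ) 1 → 0 < F θ z →
      ((Real.sqrt k ≤ F θ z ∧
          2 ≤ |1 - d * (deriv (fun t => F t z) θ) / F θ z|) ∨ F θ z < Real.sqrt k) →
      ∀ u v um vm : ℝ, ¬(u = 0 ∧ v = 0) → 100 * |u| ≤ |v| →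
        A θ z * um + B θ z * vm = u → C θ z * um + D θ z * vm = v →
        100 * |um| ≤ |vm|) := by
  obtain ⟨hc2, hc10⟩ := hc
  have hEdiff : Differentiable ℝ (Function.uncurry E) := hE.differentiable one_ne_zero
  have hEθd : ∀ θ z : ℝ, DifferentiableAt ℝ (fun t => E t z) θ := fun θ z =>
    by have hg : DifferentiableAt ℝ (fun t : ℝ => (t, z)) θ := differentiableAt_id.prodMk (differentiableAt_const z); exact (hEdiff (θ, z)).comp θ hg
  have hEzd : ∀ θ z : ℝ, DifferentiableAt ℝ (fun t => E θ t) z := fun θ z =>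
    by have h := (hEdiff (θ, z)).comp z ((differentiableAt_const θ).prodMk differentiableAt_id); exact h
  -- partial derivatives of F
  have hFθ : ∀ θ z : ℝ, HasDerivAt (fun t => F t z)
      (c * Real.cos θ + deriv (fun t => E t z) θ) θ := by
    intro θ z
    simp only [hF]
    exact ((((Real.hasDerivAt_sin θ).const_mul c).const_add 1).add_const (k*z)).add
      (hEθd θ z).hasDerivAt
  have hFz : ∀ θ z : ℝ, HasDerivAt (fun t => F θ t)
      (k + deriv (fun t => E θ t) z) z := by
    intro θ z
    simp only [hF]
    have h := (((hasDerivAt_id z).const_mul k).const_add (1 + c * Real.sin θ)).add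
      (hEzd θ z).hasDerivAt
    have h2 : k * 1 + deriv (fun t => E θ t) z = k + deriv (fun t => E θ t) z := by ring
    rw [h2] at h
    exact h
  -- values of A, B, C, D at points where F > 0
  have hAval : ∀ θ z : ℝ, 0 < F θ z →
      A θ z = 1 - d * ((c * Real.cos θ + deriv (fun t => E t z) θ) / F θ z) := by
    intro θ z hf
    simp only [hA, hT₁]
    exact (((hasDerivAt_id θ).add_const a).sub
      (((hFθ θ z).log (ne_of_gt hf)).const_mul d)).deriv
  have hBval : ∀ θ z : ℝ, 0 < F θ z →
      B θ z = -(d * ((k + deriv (fun t => E θ t) z) / F θ z)) := by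
    intro θ z hf
    simp only [hB, hT₁]
    have h := ((hasDerivAt_const z (θ + a)).sub
      (((hFz θ z).log (ne_of_gt hf)).const_mul d))
    rw [show (fun t => θ + a - d * Real.log (F θ t)) = ((fun x => θ + a) - fun y => d * Real.log (F θ y)) from rfl, h.deriv]; ring
  have hCval : ∀ θ z : ℝ, 0 < F θ z →
      C θ z = b * (γ * F θ z ^ (γ - 1) * (c * Real.cos θ + deriv (fun t => E t z) θ)) := by
    intro θ z hf
    simp only [hC, hT₂]
    have h := (((hFθ θ z).rpow_const (p := γ) (Or.inl (ne_of_gt hf))).const_mul b)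
    rw [h.deriv]; ring
  have hDval : ∀ θ z : ℝ, 0 < F θ z →
      D θ z = b * (γ * F θ z ^ (γ - 1) * (k + deriv (fun t => E θ t) z)) := by
    intro θ z hf
    simp only [hD, hT₂]
    have h := (((hFz θ z).rpow_const (p := γ) (Or.inl (ne_of_gt hf))).const_mul b)
    rw [h.deriv]; ring
  -- determinant
  have hdet : ∀ θ z : ℝ, 0 < F θ z →
      A θ z * D θ z - B θ z * C θ z
        = γ * b * F θ z ^ (γ - 1) * (k + deriv (fun t => E θ t) z) := by
    intro θ z hf
    rw [hAval θ z hf, hBval θ z hf, hCval θ z hf, hDval θ z hf]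
    field_simp
    ring
  -- common bounds
  have hγ0 : (0:ℝ) < γ := by linarith
  have hs0 : (0:ℝ) ≤ Real.sqrt k := Real.sqrt_nonneg k
  have hss : Real.sqrt k * Real.sqrt k = k := Real.mul_self_sqrt hk.le
  have hsb : Real.sqrt k ≤ 1/10000 := by nlinarith
  have hkb : k ≤ 1/100000000 := by nlinarith
  have hQlb : ∀ θ z : ℝ, k/2 ≤ k + deriv (fun t => E θ t) z := by
    intro θ z
    have := (abs_le.mp (hEbd θ z).2).1
    linarith
  have hQub : ∀ θ z : ℝ, k + deriv (fun t => E θ t) z ≤ 3*k/2 := by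
    intro θ z
    have := (abs_le.mp (hEbd θ z).2).2
    linarith
  have hQpos : ∀ θ z : ℝ, 0 < k + deriv (fun t => E θ t) z := fun θ z => by
    have := hQlb θ z; linarith
  constructor
  · intro θ z hz hf
    refine ⟨by rw [hdet θ z hf, (hFz θ z).deriv], ?_⟩
    rw [hdet θ z hf]
    have h1 : 0 < F θ z ^ (γ - 1) := Real.rpow_pos_of_pos hf _
    have h2 := hQpos θ z
    positivity
  · intro θ z hz hf hcase u v um vm huv hu h1 h2
    obtain ⟨hz1, hz2⟩ := hz
    have hfne : F θ z ≠ 0 := ne_of_gt hf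
    rw [hAval θ z hf, hBval θ z hf] at h1
    rw [hCval θ z hf, hDval θ z hf] at h2
    obtain ⟨P, hPdef⟩ : ∃ x, c * Real.cos θ + deriv (fun t => E t z) θ = x := ⟨_, rfl⟩
    obtain ⟨Q, hQdef⟩ : ∃ x, k + deriv (fun t => E θ t) z = x := ⟨_, rfl⟩
    have hQl : k/2 ≤ Q := by rw [← hQdef]; exact hQlb θ z
    have hQu : Q ≤ 3*k/2 := by rw [← hQdef]; exact hQub θ z
    have hQp : 0 < Q := by rw [← hQdef]; exact hQpos θ z
    obtain ⟨G, hGdef⟩ : ∃ x, γ * F θ z ^ (γ - 1) = x := ⟨_, rfl⟩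
    have hGpos : 0 < G := by
      rw [← hGdef]; exact mul_pos hγ0 (Real.rpow_pos_of_pos hf _)
    rw [hPdef, hQdef] at h1
    rw [hPdef, hQdef, hGdef] at h2
    -- Cramer
    have hum : b * (G * Q) * um = b * (G * Q) * u + d * (Q / F θ z) * v := by
      linear_combination (b * (G * Q)) * h1 + (d * (Q / F θ z)) * h2
    have hvm : b * (G * Q) * vm = (1 - d * (P / F θ z)) * v - b * (G * P) * u := by
      linear_combination (1 - d * (P / F θ z)) * h2 - (b * (G * P)) * h1
    -- upper bound on F
    have hEab : |E θ z| ≤ 1/50 := by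
      have := (hEbd θ z).1
      have := abs_nonneg (deriv (fun t => E t z) θ)
      linarith
    have hEθb : |deriv (fun t => E t z) θ| ≤ 1/50 := by
      have := (hEbd θ z).1
      have := abs_nonneg (E θ z)
      linarith
    have hfub : F θ z ≤ 12 := by
      simp only [hF]
      have h1 := Real.sin_le_one θ
      have h2 := (abs_le.mp hEab).2
      nlinarith [mul_nonneg (show (0:ℝ) ≤ c by linarith)
          (show (0:ℝ) ≤ 1 - Real.sin θ by linarith),
        mul_nonneg hk.le (show (0:ℝ) ≤ 1 - z by linarith)]
    -- bound on b * G
    have hbG : b * G ≤ 1/120000 := by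
      have h1 : F θ z ^ (γ - 1) ≤ (12:ℝ) ^ (γ - 1) :=
        Real.rpow_le_rpow hf.le hfub (by linarith)
      have h2 : (12:ℝ) ^ (γ - 1) = (12:ℝ) ^ γ / 12 := by
        rw [Real.rpow_sub (by norm_num), Real.rpow_one]
      have h3 : 0 < F θ z ^ (γ - 1) := Real.rpow_pos_of_pos hf _
      have h4 : γ * b * F θ z ^ (γ - 1) ≤ γ * b * ((12:ℝ) ^ γ / 12) := by
        apply mul_le_mul_of_nonneg_left _ (by positivity)
        rw [← h2]; exact h1
      have h5 : γ * b * ((12:ℝ) ^ γ / 12) ≤ (1/10000) / 12 := by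
        rw [mul_div_assoc' ]
        apply div_le_div_of_nonneg_right ?_ (by norm_num)
        · linarith [hγb]
      calc b * G = γ * b * F θ z ^ (γ - 1) := by rw [← hGdef]; ring
        _ ≤ (1/10000)/12 := le_trans h4 h5
        _ ≤ 1/120000 := by norm_num
    have hbGP : b * (G * Q) ≤ k := by
      have e1 : b * G * Q ≤ (1/120000) * Q := mul_le_mul_of_nonneg_right hbG hQp.le
      have e2 : (1/120000) * Q ≤ (1/120000) * (3*k/2) :=
        mul_le_mul_of_nonneg_left hQu (by norm_num)
      calc b * (G * Q) = b * G * Q := by ring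
        _ ≤ (1/120000) * (3*k/2) := le_trans e1 e2
        _ ≤ k := by linarith
    have hPub : |P| ≤ 11 := by
      have h1 : |c * Real.cos θ| ≤ 10 := by
        rw [abs_mul, abs_of_pos (show (0:ℝ) < c by linarith)]
        calc c * |Real.cos θ| ≤ c * 1 :=
              mul_le_mul_of_nonneg_left (Real.abs_cos_le_one θ) (by linarith)
          _ ≤ 10 := by linarith
      calc |P| = |c * Real.cos θ + deriv (fun t => E t z) θ| := by rw [← hPdef]
        _ ≤ |c * Real.cos θ| + |deriv (fun t => E t z) θ| := abs_add_le _ _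
        _ ≤ 11 := by linarith
    -- reduce to determinant-scaled inequality
    have hΔpos : 0 < b * (G * Q) := by positivity
    suffices hkey : 100 * |b * (G * Q) * u + d * (Q / F θ z) * v|
        ≤ |(1 - d * (P / F θ z)) * v - b * (G * P) * u| by
      rw [← hum, ← hvm] at hkey
      rw [abs_mul (b * (G * Q)) um, abs_mul (b * (G * Q)) vm, abs_of_pos hΔpos] at hkey
      have h6 : (b * (G * Q)) * (100 * |um|) ≤ (b * (G * Q)) * |vm| := by
        linarith only [hkey]
      exact le_of_mul_le_mul_left h6 hΔpos
    -- triangle inequality on the left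
    have hdQf : 0 ≤ d * (Q / F θ z) := by positivity
    have hL : |b * (G * Q) * u + d * (Q / F θ z) * v|
        ≤ b * (G * Q) * |u| + d * (Q / F θ z) * |v| := by
      calc |b * (G * Q) * u + d * (Q / F θ z) * v|
          ≤ |b * (G * Q) * u| + |d * (Q / F θ z) * v| := abs_add_le _ _
        _ = b * (G * Q) * |u| + d * (Q / F θ z) * |v| := by
            rw [abs_mul (b * (G * Q)) u, abs_mul (d * (Q / F θ z)) v,
              abs_of_pos hΔpos, abs_of_nonneg hdQf]
    -- generic lower bound on the right
    have hR : |1 - d * (P / F θ z)| * |v| - b * G * |P| * |u|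
        ≤ |(1 - d * (P / F θ z)) * v - b * (G * P) * u| := by
      have h3 := abs_sub_abs_le_abs_sub ((1 - d * (P / F θ z)) * v) (b * (G * P) * u)
      have h4 : |(1 - d * (P / F θ z)) * v| = |1 - d * (P / F θ z)| * |v| := abs_mul _ _
      have h5 : |b * (G * P) * u| = b * G * |P| * |u| := by
        rw [abs_mul (b * (G * P)) u, abs_mul b (G * P), abs_mul G P,
          abs_of_pos hb, abs_of_pos hGpos]
        ring
      linarith only [h3, h4, h5]
    have hbGPub : b * G * |P| ≤ 1/10000 := by
      have e1 : b * G * |P| ≤ (1/120000) * |P| := mul_le_mul_of_nonneg_right hbG (abs_nonneg P)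
      have e2 : (1/120000) * |P| ≤ (1/120000) * 11 := mul_le_mul_of_nonneg_left hPub (by norm_num)
      calc b * G * |P| ≤ (1/120000) * 11 := le_trans e1 e2
        _ ≤ 1/10000 := by norm_num
    have hbGQu : b * (G * Q) * |u| ≤ k * |u| :=
      mul_le_mul_of_nonneg_right hbGP (abs_nonneg u)
    have hkuv : k * |u| ≤ (1/100000000) * |u| :=
      mul_le_mul_of_nonneg_right hkb (abs_nonneg u)
    have hbGPu : b * G * |P| * |u| ≤ (1/10000) * |u| :=
      mul_le_mul_of_nonneg_right hbGPub (abs_nonneg u)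
    rcases hcase with ⟨hsf, hA2⟩ | hsf
    · -- Case 1 : sqrt k ≤ F and |A| ≥ 2
      rw [(hFθ θ z).deriv, mul_div_assoc, hPdef] at hA2
      have hc1 : d * (Q / F θ z) ≤ 3/200 := by
        rw [mul_div_assoc', div_le_iff₀ hf]
        have i1 : 0 ≤ d * (3*(Real.sqrt k * Real.sqrt k)/2 - Q) :=
          mul_nonneg (by linarith) (by rw [hss]; linarith)
        have i2 : 0 ≤ Real.sqrt k * (1/100 - d * Real.sqrt k) :=
          mul_nonneg hs0 (by linarith)
        linarith only [i1, i2, hsf, hs0]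
      have hc2' : d * (Q / F θ z) * |v| ≤ (3/200) * |v| :=
        mul_le_mul_of_nonneg_right hc1 (abs_nonneg v)
      have hA2v : 2 * |v| ≤ |1 - d * (P / F θ z)| * |v| :=
        mul_le_mul_of_nonneg_right hA2 (abs_nonneg v)
      linarith only [hL, hR, hu, abs_nonneg u, abs_nonneg v, hbGQu, hkuv, hbGPu, hc2', hA2v]
    · -- Case 2 : F < sqrt k
      -- bound on sin θ
      have hfval : F θ z = 1 + c * Real.sin θ + k * z + E θ z := by rw [hF]
      have hkz1 : -k ≤ k * z := by
        linarith only [mul_nonneg hk.le (show (0:ℝ) ≤ z + 1 by linarith)]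
      have hkz2 : k * z ≤ k := by
        linarith only [mul_nonneg hk.le (show (0:ℝ) ≤ 1 - z by linarith)]
      have hEa := abs_le.mp hEab
      have hfs : F θ z < 1/10000 := lt_of_lt_of_le hsf hsb
      have hsinub : c * Real.sin θ ≤ -(97/100) := by
        linarith only [hfval, hfs, hkz1, hEa.1, hkb]
      have hsinlb : -(103/100) ≤ c * Real.sin θ := by
        linarith only [hfval, hf, hkz2, hEa.2, hkb]
      have hS0 : Real.sin θ ≤ 0 := by
        by_contra hcon
        push_neg at hcon
        linarith only [hsinub, mul_pos (show (0:ℝ) < c by linarith) hcon]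
      have hSlb : -(103/200) ≤ Real.sin θ := by
        have i3 : 0 ≤ (c - 2) * (-Real.sin θ) := mul_nonneg (by linarith) (by linarith)
        linarith only [hsinlb, i3]
      have hS2 : Real.sin θ ^ 2 ≤ 27/100 := by
        have i4 : 0 ≤ (-Real.sin θ) * (Real.sin θ + 103/200) :=
          mul_nonneg (by linarith) (by linarith)
        linarith only [i4, hSlb]
      have hcos2 : 73/100 ≤ Real.cos θ ^ 2 := by
        have := Real.sin_sq_add_cos_sq θ
        linarith
      have hcosabs : 17/20 ≤ |Real.cos θ| := by
        by_contra hcon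
        push_neg at hcon
        have i9 : |Real.cos θ| * |Real.cos θ| < (17/20) * (17/20) :=
          mul_lt_mul'' hcon hcon (abs_nonneg _) (abs_nonneg _)
        linarith only [i9, hcos2, sq_abs (Real.cos θ)]
      have hPlb : 3/2 ≤ |P| := by
        have h3 : |c * Real.cos θ| ≤ |P| + |deriv (fun t => E t z) θ| := by
          have h4 := abs_add_le P (-(deriv (fun t => E t z) θ))
          have h5 : P + -(deriv (fun t => E t z) θ) = c * Real.cos θ := by
            rw [← hPdef]; ring
          rw [h5, abs_neg] at h4
          exact h4
        have h6 : c * |Real.cos θ| = |c * Real.cos θ| := by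
          rw [abs_mul, abs_of_pos (show (0:ℝ) < c by linarith)]
        have i5 : 0 ≤ (c - 2) * |Real.cos θ| := mul_nonneg (by linarith) (abs_nonneg _)
        linarith only [h3, h6, hcosabs, hEθb, i5]
      -- multiply goal through by F θ z
      suffices hkey2 : 100 * (F θ z * |b * (G * Q) * u + d * (Q / F θ z) * v|)
          ≤ F θ z * |(1 - d * (P / F θ z)) * v - b * (G * P) * u| by
        have h7 : F θ z * (100 * |b * (G * Q) * u + d * (Q / F θ z) * v|)
            ≤ F θ z * |(1 - d * (P / F θ z)) * v - b * (G * P) * u| := by linarith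
        exact le_of_mul_le_mul_left h7 hf
      -- left side
      have hLf : F θ z * |b * (G * Q) * u + d * (Q / F θ z) * v|
          ≤ F θ z * (b * (G * Q)) * |u| + d * Q * |v| := by
        have h8 := mul_le_mul_of_nonneg_left hL hf.le
        have h9 : F θ z * (b * (G * Q) * |u| + d * (Q / F θ z) * |v|)
            = F θ z * (b * (G * Q)) * |u| + d * Q * |v| := by
          field_simp
        linarith
      have hfbGQ : F θ z * (b * (G * Q)) ≤ k := by
        have i6 : 0 ≤ (1 - F θ z) * (b * (G * Q)) := mul_nonneg (by linarith) hΔpos.le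
        linarith only [hbGP, i6]
      have hdQ : 100 * (d * Q) ≤ 1 := by
        have i1 : 0 ≤ d * (3*(Real.sqrt k * Real.sqrt k)/2 - Q) :=
          mul_nonneg (by linarith) (by rw [hss]; linarith)
        have i2 : 0 ≤ Real.sqrt k * (1/100 - d * Real.sqrt k) :=
          mul_nonneg hs0 (by linarith)
        linarith only [i1, i2, hsb, hs0]
      -- right side
      have hfA : 149 ≤ F θ z * |1 - d * (P / F θ z)| := by
        have h10 : F θ z * (1 - d * (P / F θ z)) = F θ z - d * P := by
          field_simp
        have h11 : F θ z * |1 - d * (P / F θ z)| = |F θ z - d * P| := by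
          rw [← h10, abs_mul, abs_of_pos hf]
        rw [h11]
        have h12 : |d * P| - |F θ z| ≤ |F θ z - d * P| := by
          have := abs_sub_abs_le_abs_sub (d * P) (F θ z)
          rw [abs_sub_comm] at this
          exact this
        have h13 : |d * P| = d * |P| := by
          rw [abs_mul, abs_of_pos (show (0:ℝ) < d by linarith)]
        have h14 : |F θ z| = F θ z := abs_of_pos hf
        have i7 : 0 ≤ (d - 100) * |P| := mul_nonneg (by linarith) (abs_nonneg P)
        linarith only [h12, h13, h14, hPlb, hfs, i7]
      have hRf : 149 * |v| - (1/10000) * |u|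
          ≤ F θ z * |(1 - d * (P / F θ z)) * v - b * (G * P) * u| := by
        have h15 := mul_le_mul_of_nonneg_left hR hf.le
        have h16 : F θ z * (|1 - d * (P / F θ z)| * |v| - b * G * |P| * |u|)
            = (F θ z * |1 - d * (P / F θ z)|) * |v| - F θ z * (b * G * |P|) * |u| := by
          ring
        have h17 : 149 * |v| ≤ (F θ z * |1 - d * (P / F θ z)|) * |v| :=
          mul_le_mul_of_nonneg_right hfA (abs_nonneg v)
        have h18 : F θ z * (b * G * |P|) ≤ 1/10000 := by
          have i8 : 0 ≤ (1 - F θ z) * (b * G * |P|) :=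
            mul_nonneg (by linarith) (mul_nonneg (mul_nonneg hb.le hGpos.le) (abs_nonneg P))
          linarith only [hbGPub, i8]
        have h19 : F θ z * (b * G * |P|) * |u| ≤ (1/10000) * |u| :=
          mul_le_mul_of_nonneg_right h18 (abs_nonneg u)
        linarith
      have hdQv : d * Q * |v| ≤ (1/100) * |v| := by
        apply mul_le_mul_of_nonneg_right _ (abs_nonneg v)
        linarith
      have hfkuv : F θ z * (b * (G * Q)) * |u| ≤ (1/100000000) * |u| := by
        calc F θ z * (b * (G * Q)) * |u| ≤ k * |u| :=
              mul_le_mul_of_nonneg_right hfbGQ (abs_nonneg u)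
          _ ≤ (1/100000000) * |u| := hkuv
      linarith only [hLf, hRf, hdQv, hfkuv, hu, abs_nonneg u, abs_nonneg v]
end

section
/- Set λ = (B − √(B² − 4C))/2, the square of the smallest singular value of M. Then the vector w = (‖Mv‖² − λ)·u − ⟨Mv, Mu⟩·v satisfies ‖Mw‖² = λ·‖w‖². In particular, if w ≠ 0 then the unit vector w/‖w‖ is a most contracted direction of M, i.e. ‖M(w/‖w‖)‖ ≤ ‖Mx‖ for every unit vector x. -/
section helpers
variable (p0 p1 q0 q1 : ℝ)

private lemma ortho_q0' (hp : p0^2+p1^2=1) (hpq : p0*q0+p1*q1=0) :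
    q0 = -(p0*q1-p1*q0)*p1 := by linear_combination p0*hpq - q0*hp

private lemma ortho_q1' (hp : p0^2+p1^2=1) (hpq : p0*q0+p1*q1=0) :
    q1 = (p0*q1-p1*q0)*p0 := by linear_combination p1*hpq - q1*hp

private lemma ortho_D' (hp : p0^2+p1^2=1) (hq : q0^2+q1^2=1) (hpq : p0*q0+p1*q1=0) :
    (p0*q1-p1*q0)^2 = 1 := by
  linear_combination (q0^2+q1^2)*hp + hq - (p0*q0+p1*q1)*hpq

private lemma ortho_f1' (hp : p0^2+p1^2=1) (hq : q0^2+q1^2=1) (hpq : p0*q0+p1*q1=0) :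
    p0^2+q0^2 = 1 := by
  linear_combination hp + p1^2 * (ortho_D' p0 p1 q0 q1 hp hq hpq)
    + (q0 - (p0*q1-p1*q0)*p1) * (ortho_q0' p0 p1 q0 q1 hp hpq)

private lemma ortho_f2' (hp : p0^2+p1^2=1) (hq : q0^2+q1^2=1) (hpq : p0*q0+p1*q1=0) :
    p1^2+q1^2 = 1 := by
  linear_combination hp + p0^2 * (ortho_D' p0 p1 q0 q1 hp hq hpq)
    + (q1 + (p0*q1-p1*q0)*p0) * (ortho_q1' p0 p1 q0 q1 hp hpq)

private lemma ortho_f3' (hp : p0^2+p1^2=1) (hq : q0^2+q1^2=1) (hpq : p0*q0+p1*q1=0) :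
    p0*p1+q0*q1 = 0 := by
  linear_combination (-(p0*p1)) * (ortho_D' p0 p1 q0 q1 hp hq hpq)
    + q1 * (ortho_q0' p0 p1 q0 q1 hp hpq)
    + (-(p0*q1-p1*q0)*p1) * (ortho_q1' p0 p1 q0 q1 hp hpq)

private lemma rowsum' (r0 r1 : ℝ) (hp : p0^2+p1^2=1) (hq : q0^2+q1^2=1)
    (hpq : p0*q0+p1*q1=0) :
    (r0*p0+r1*p1)^2 + (r0*q0+r1*q1)^2 = r0^2+r1^2 := by
  linear_combination r0^2 * (ortho_f1' p0 p1 q0 q1 hp hq hpq)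
    + r1^2 * (ortho_f2' p0 p1 q0 q1 hp hq hpq)
    + (2*r0*r1) * (ortho_f3' p0 p1 q0 q1 hp hq hpq)

end helpers

set_option maxHeartbeats 1000000 in
/-- The explicit formula for a most contracted direction of a 2×2 real matrix:
w = (‖Mv‖² − λ)·u − ⟨Mv, Mu⟩·v satisfies ‖Mw‖² = λ‖w‖², and if w ≠ 0 then
w/‖w‖ is a most contracted direction. -/
theorem stmt12 (M : Matrix (Fin 2) (Fin 2) ℝ)
    (u v : EuclideanSpace ℝ (Fin 2))
    (hu : ‖u‖ = 1) (hv : ‖v‖ = 1) (huv : inner ℝ u v = (0:ℝ))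
    (B C lam : ℝ)
    (hB : B = ‖Matrix.toEuclideanLin M u‖ ^ 2 + ‖Matrix.toEuclideanLin M v‖ ^ 2)
    (hC : C = M.det ^ 2)
    (hlam : lam = (B - Real.sqrt (B ^ 2 - 4 * C)) / 2)
    (w : EuclideanSpace ℝ (Fin 2))
    (hw : w = (‖Matrix.toEuclideanLin M v‖ ^ 2 - lam) • u -
        (inner ℝ (Matrix.toEuclideanLin M v) (Matrix.toEuclideanLin M u) : ℝ) • v) :
    ‖Matrix.toEuclideanLin M w‖ ^ 2 = lam * ‖w‖ ^ 2 ∧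
    (w ≠ 0 → ∀ x : EuclideanSpace ℝ (Fin 2), ‖x‖ = 1 →
      ‖Matrix.toEuclideanLin M (‖w‖⁻¹ • w)‖ ≤ ‖Matrix.toEuclideanLin M x‖) := by
  set T := Matrix.toEuclideanLin M with hT
  have coord : ∀ y : EuclideanSpace ℝ (Fin 2), ∀ i, (T y) i = M i 0 * y 0 + M i 1 * y 1 := by
    intro y i
    simp [hT, Matrix.toEuclideanLin_apply, Matrix.mulVec, dotProduct, Fin.sum_univ_two]
    fin_cases i <;> simp
  have norm2 : ∀ y : EuclideanSpace ℝ (Fin 2), ‖y‖^2 = (y 0)^2 + (y 1)^2 := by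
    intro y
    rw [← real_inner_self_eq_norm_sq]
    simp only [PiLp.inner_apply, Fin.sum_univ_two, RCLike.inner_apply, conj_trivial]
    ring
  have inner2 : ∀ y z : EuclideanSpace ℝ (Fin 2), (inner ℝ y z : ℝ) = y 0 * z 0 + y 1 * z 1 := by
    intro y z
    simp [PiLp.inner_apply, Fin.sum_univ_two, mul_comm]
  have hu2 : (u 0)^2 + (u 1)^2 = 1 := by rw [← norm2, hu]; norm_num
  have hv2 : (v 0)^2 + (v 1)^2 = 1 := by rw [← norm2, hv]; norm_num
  have huv2 : u 0 * v 0 + u 1 * v 1 = 0 := by rw [← inner2]; exact huv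
  have hD := ortho_D' (u 0) (u 1) (v 0) (v 1) hu2 hv2 huv2
  -- polynomial forms of a, b, c
  have haP : ‖T u‖^2 = (M 0 0 * u 0 + M 0 1 * u 1)^2 + (M 1 0 * u 0 + M 1 1 * u 1)^2 := by
    rw [norm2, coord u 0, coord u 1]
  have hcP : ‖T v‖^2 = (M 0 0 * v 0 + M 0 1 * v 1)^2 + (M 1 0 * v 0 + M 1 1 * v 1)^2 := by
    rw [norm2, coord v 0, coord v 1]
  have hbP : (inner ℝ (T v) (T u) : ℝ) =
      (M 0 0 * v 0 + M 0 1 * v 1) * (M 0 0 * u 0 + M 0 1 * u 1)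
      + (M 1 0 * v 0 + M 1 1 * v 1) * (M 1 0 * u 0 + M 1 1 * u 1) := by
    rw [inner2, coord v 0, coord v 1, coord u 0, coord u 1]
  have hdet : M.det = M 0 0 * M 1 1 - M 0 1 * M 1 0 := Matrix.det_fin_two M
  have hC' : C = ‖T v‖^2 * ‖T u‖^2 - (inner ℝ (T v) (T u) : ℝ)^2 := by
    rw [hC, hdet, haP, hcP, hbP]
    linear_combination (-((M 0 0 * M 1 1 - M 0 1 * M 1 0)^2)) * hD
  have hBCnn : B^2 - 4*C = (‖T v‖^2 - ‖T u‖^2)^2 + 4*(inner ℝ (T v) (T u) : ℝ)^2 := by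
    rw [hB, hC']; ring
  have hnn : 0 ≤ B^2 - 4*C := by rw [hBCnn]; positivity
  have hs2 : Real.sqrt (B^2 - 4*C) ^ 2 = B^2 - 4*C := Real.sq_sqrt hnn
  have hs0 : 0 ≤ Real.sqrt (B^2 - 4*C) := Real.sqrt_nonneg _
  have hq : lam^2 - B*lam + C = 0 := by rw [hlam]; linear_combination hs2 / 4
  -- part 1
  have hTw : T w = (‖T v‖^2 - lam) • T u - (inner ℝ (T v) (T u) : ℝ) • T v := by
    rw [hw, map_sub, map_smul, map_smul]
  have key1 : ‖T w‖^2 = (‖T v‖^2 - lam)^2 * ‖T u‖^2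
      - 2*(‖T v‖^2 - lam)*(inner ℝ (T v) (T u) : ℝ)*(inner ℝ (T v) (T u) : ℝ)
      + (inner ℝ (T v) (T u) : ℝ)^2 * ‖T v‖^2 := by
    rw [hTw, norm_sub_sq_real, norm_smul, norm_smul, real_inner_smul_left,
      real_inner_smul_right, real_inner_comm (T u) (T v)]
    simp [mul_pow, sq_abs]
    ring
  have key2 : ‖w‖^2 = (‖T v‖^2 - lam)^2 + (inner ℝ (T v) (T u) : ℝ)^2 := by
    rw [hw, norm_sub_sq_real, norm_smul, norm_smul, real_inner_smul_left,
      real_inner_smul_right, hu, hv, huv]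
    simp [mul_pow, sq_abs]
  have part1 : ‖T w‖^2 = lam * ‖w‖^2 := by
    linear_combination key1 - lam * key2 + (‖T v‖^2 - lam) * hq
      + lam*(‖T v‖^2 - lam) * hB - (‖T v‖^2 - lam) * hC'
  refine ⟨part1, ?_⟩
  intro hwne x hx
  have hwpos : (0:ℝ) < ‖w‖ := norm_pos_iff.mpr hwne
  have hlhs : ‖T (‖w‖⁻¹ • w)‖^2 = lam := by
    rw [map_smul, norm_smul, mul_pow, part1, norm_inv, norm_norm]
    field_simp
  have hx2 : (x 0)^2 + (x 1)^2 = 1 := by rw [← norm2, hx]; norm_num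
  have hx2' : (-(x 1))^2 + (x 0)^2 = 1 := by linear_combination hx2
  have hxperp : x 0 * (-(x 1)) + x 1 * (x 0) = 0 := by ring
  obtain ⟨Q, hQdef⟩ : ∃ t, (M 0 0 * x 0 + M 0 1 * x 1)^2 + (M 1 0 * x 0 + M 1 1 * x 1)^2 = t :=
    ⟨_, rfl⟩
  obtain ⟨Q', hQ'def⟩ : ∃ t,
      (M 0 0 * (-(x 1)) + M 0 1 * (x 0))^2 + (M 1 0 * (-(x 1)) + M 1 1 * (x 0))^2 = t :=
    ⟨_, rfl⟩
  obtain ⟨bb, hbbdef⟩ : ∃ t, (M 0 0 * x 0 + M 0 1 * x 1) * (M 0 0 * (-(x 1)) + M 0 1 * (x 0))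
        + (M 1 0 * x 0 + M 1 1 * x 1) * (M 1 0 * (-(x 1)) + M 1 1 * (x 0)) = t := ⟨_, rfl⟩
  have hQP : ‖T x‖^2 = Q := by
    rw [norm2, coord x 0, coord x 1, hQdef]
  have hBQ : B = Q + Q' := by
    rw [hB, haP, hcP, ← hQdef, ← hQ'def]
    linear_combination rowsum' (u 0) (u 1) (v 0) (v 1) (M 0 0) (M 0 1) hu2 hv2 huv2
      + rowsum' (u 0) (u 1) (v 0) (v 1) (M 1 0) (M 1 1) hu2 hv2 huv2
      - rowsum' (x 0) (x 1) (-(x 1)) (x 0) (M 0 0) (M 0 1) hx2 hx2' hxperp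
      - rowsum' (x 0) (x 1) (-(x 1)) (x 0) (M 1 0) (M 1 1) hx2 hx2' hxperp
  have hCQ : C = Q * Q' - bb^2 := by
    rw [hC, hdet, ← hQdef, ← hQ'def, ← hbbdef]
    linear_combination (-((M 0 0 * M 1 1 - M 0 1 * M 1 0)^2 * ((x 0)^2 + (x 1)^2 + 1))) * hx2
  have hineq : (‖T x‖^2)^2 - B*(‖T x‖^2) + C ≤ 0 := by
    rw [hQP, hBQ, hCQ]
    nlinarith only [sq_nonneg bb]
  have h2 : (2*‖T x‖^2 - B)^2 ≤ Real.sqrt (B^2 - 4*C)^2 := by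
    rw [hs2]; nlinarith only [hineq]
  have h3 : B - 2*‖T x‖^2 ≤ Real.sqrt (B^2 - 4*C) := by
    nlinarith only [h2, hs0]
  have hlamle : lam ≤ ‖T x‖^2 := by
    rw [hlam]; linarith only [h3]
  calc ‖T (‖w‖⁻¹ • w)‖ = Real.sqrt (‖T (‖w‖⁻¹ • w)‖^2) := (Real.sqrt_sq (norm_nonneg _)).symm
    _ ≤ Real.sqrt (‖T x‖^2) := Real.sqrt_le_sqrt (by rw [hlhs]; exact hlamle)
    _ = ‖T x‖ := Real.sqrt_sq (norm_nonneg _)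
end

section
/- There is a constant C depending only on K (one may take C = 32K⁵) such that, provided C·b ≤ 1/2, the following hold. For each 1 ≤ i ≤ n the minimum of ‖M^{(i)}x‖ over unit vectors x is at most (K·b)^i; the most contracted unit direction e_i of M^{(i)} exists and is unique up to sign; and the signs of the e_i can be chosen so that ‖e_{i+1} − e_i‖ ≤ (C·b)^i for all 1 ≤ i < n, and ‖M^{(i)}·e_n‖ ≤ (C·b)^i for all 1 ≤ i ≤ n. -/
set_option maxHeartbeats 1000000

open scoped RealInnerProductSpace

noncomputable section StmtAux

local notation "V2" => EuclideanSpace ℝ (Fin 2)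

def rot2 (x : V2) : V2 := (WithLp.equiv 2 (Fin 2 → ℝ)).symm ![-(x 1), x 0]

lemma rot2_apply0 (x : V2) : rot2 x 0 = -(x 1) := rfl
lemma rot2_apply1 (x : V2) : rot2 x 1 = x 0 := rfl

lemma ext2 (x y : V2) (h0 : x 0 = y 0) (h1 : x 1 = y 1) : x = y := by
  apply PiLp.ext; intro j
  fin_cases j
  · exact h0
  · exact h1

lemma inner2 (x y : V2) : ⟪x, y⟫ = x 0 * y 0 + x 1 * y 1 := by
  simp [PiLp.inner_apply, Fin.sum_univ_two, RCLike.inner_apply, mul_comm]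

lemma normsq2 (x : V2) : ‖x‖ ^ 2 = x 0 ^ 2 + x 1 ^ 2 := by
  rw [← real_inner_self_eq_norm_sq, inner2]; ring

lemma tEL_apply0 (A : Matrix (Fin 2) (Fin 2) ℝ) (x : V2) :
    Matrix.toEuclideanLin A x 0 = A 0 0 * x 0 + A 0 1 * x 1 := by
  simp [Matrix.toEuclideanLin_apply, Matrix.mulVec, dotProduct, Fin.sum_univ_two]

lemma tEL_apply1 (A : Matrix (Fin 2) (Fin 2) ℝ) (x : V2) :
    Matrix.toEuclideanLin A x 1 = A 1 0 * x 0 + A 1 1 * x 1 := by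
  simp [Matrix.toEuclideanLin_apply, Matrix.mulVec, dotProduct, Fin.sum_univ_two]

lemma tEL_mul (A B : Matrix (Fin 2) (Fin 2) ℝ) (x : V2) :
    Matrix.toEuclideanLin (A * B) x = Matrix.toEuclideanLin A (Matrix.toEuclideanLin B x) := by
  apply ext2 <;>
    simp only [tEL_apply0, tEL_apply1, Matrix.mul_apply, Fin.sum_univ_two] <;> ring

lemma rot2_norm (x : V2) : ‖rot2 x‖ = ‖x‖ := by
  have h1 := normsq2 (rot2 x); have h2 := normsq2 x
  rw [rot2_apply0, rot2_apply1] at h1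
  nlinarith [norm_nonneg x, norm_nonneg (rot2 x)]

lemma rot2_inner (x : V2) : ⟪x, rot2 x⟫ = 0 := by
  rw [inner2, rot2_apply0, rot2_apply1]; ring

lemma smul_add_apply (a b : ℝ) (u v : V2) (j : Fin 2) :
    (a • u + b • v) j = a * u j + b * v j := rfl

/-- decomposition in the orthonormal basis e, rot2 e -/
lemma decomp2 (e x : V2) (he : ‖e‖ = 1) :
    x = ⟪x, e⟫ • e + ⟪x, rot2 e⟫ • rot2 e := by
  have hu : e 0 ^ 2 + e 1 ^ 2 = 1 := by rw [← normsq2, he]; norm_num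
  apply ext2 <;>
      rw [smul_add_apply, inner2, inner2] <;>
      simp only [rot2_apply0, rot2_apply1]
  · linear_combination (-(x 0)) * hu
  · linear_combination (-(x 1)) * hu

/-- coefficients of a unit vector sum to 1 -/
lemma coeff_sq (e x : V2) (he : ‖e‖ = 1) :
    ⟪x, e⟫ ^ 2 + ⟪x, rot2 e⟫ ^ 2 = ‖x‖ ^ 2 := by
  have hu : e 0 ^ 2 + e 1 ^ 2 = 1 := by rw [← normsq2, he]; norm_num
  rw [inner2, inner2, normsq2]
  simp only [rot2_apply0, rot2_apply1]
  nlinarith [hu]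


lemma exists_min (A : Matrix (Fin 2) (Fin 2) ℝ) : ∃ e : V2, ‖e‖ = 1 ∧
    ∀ x : V2, ‖x‖ = 1 → ‖Matrix.toEuclideanLin A e‖ ≤ ‖Matrix.toEuclideanLin A x‖ := by
  have hc : IsCompact (Metric.sphere (0 : V2) 1) := isCompact_sphere 0 1
  have hne : (Metric.sphere (0 : V2) 1).Nonempty :=
    NormedSpace.sphere_nonempty.2 (by norm_num)
  obtain ⟨e, heS, hmin⟩ := hc.exists_isMinOn hne
    (Continuous.continuousOn
      (by continuity : Continuous fun x : V2 => ‖Matrix.toEuclideanLin A x‖))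
  refine ⟨e, by simpa using heS, fun x hx => hmin ?_⟩
  simpa using hx

lemma min_low (A : Matrix (Fin 2) (Fin 2) ℝ) (e : V2) (he : ‖e‖ = 1)
    (hmin : ∀ x : V2, ‖x‖ = 1 → ‖Matrix.toEuclideanLin A e‖ ≤ ‖Matrix.toEuclideanLin A x‖) :
    ∀ v : V2, ‖Matrix.toEuclideanLin A e‖ * ‖v‖ ≤ ‖Matrix.toEuclideanLin A v‖ := by
  intro v
  rcases eq_or_ne v 0 with rfl | hv
  · simp
  · have hnv : ‖v‖ ≠ 0 := norm_ne_zero_iff.2 hv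
    have h1 : ‖(‖v‖⁻¹ • v : V2)‖ = 1 := by
      rw [norm_smul, norm_inv, norm_norm, inv_mul_cancel₀ hnv]
    have h2 := hmin _ h1
    simp only [map_smul, norm_smul, norm_inv, norm_norm] at h2
    calc ‖Matrix.toEuclideanLin A e‖ * ‖v‖ ≤ (‖v‖⁻¹ * ‖Matrix.toEuclideanLin A v‖) * ‖v‖ :=
      mul_le_mul_of_nonneg_right h2 (norm_nonneg v)
    _ = ‖Matrix.toEuclideanLin A v‖ := by field_simp

lemma min_crit (A : Matrix (Fin 2) (Fin 2) ℝ) (e : V2) (he : ‖e‖ = 1)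
    (hmin : ∀ x : V2, ‖x‖ = 1 → ‖Matrix.toEuclideanLin A e‖ ≤ ‖Matrix.toEuclideanLin A x‖) :
    ∀ y : V2, ⟪Matrix.toEuclideanLin A e, Matrix.toEuclideanLin A y⟫ =
      ‖Matrix.toEuclideanLin A e‖ ^ 2 * ⟪e, y⟫ := by
  set T := Matrix.toEuclideanLin A with hT
  have horth : ∀ y : V2, ⟪e, y⟫ = 0 → ⟪T e, T y⟫ = 0 := by
    intro y hey
    set q : ℝ := ⟪T e, T y⟫ with hq
    set p : ℝ := ‖T y‖ ^ 2 - ‖T e‖ ^ 2 * ‖y‖ ^ 2 with hp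
    have hp0 : 0 ≤ p := by
      have := min_low A e he hmin y
      nlinarith [norm_nonneg (T y), mul_nonneg (norm_nonneg (T e)) (norm_nonneg y)]
    have key : ∀ t : ℝ, 0 ≤ 2 * t * q + t ^ 2 * p := by
      intro t
      have hv : ‖T e‖ * ‖e + t • y‖ ≤ ‖T (e + t • y)‖ := min_low A e he hmin _
      have hL : ‖T (e + t • y)‖ ^ 2 =
          ‖T e‖ ^ 2 + 2 * t * q + t ^ 2 * ‖T y‖ ^ 2 := by
        rw [map_add, map_smul, @norm_add_sq_real, real_inner_smul_right, norm_smul]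
        simp only [hq, mul_pow, Real.norm_eq_abs, sq_abs]
        ring
      have hR : ‖e + t • y‖ ^ 2 = 1 + t ^ 2 * ‖y‖ ^ 2 := by
        rw [@norm_add_sq_real, real_inner_smul_right, hey, norm_smul, he]
        simp only [mul_pow, Real.norm_eq_abs, sq_abs]
        ring
      have hsq : (‖T e‖ * ‖e + t • y‖)^2 ≤ ‖T (e + t • y)‖^2 := by
        have h1 : 0 ≤ ‖T e‖ * ‖e + t • y‖ := mul_nonneg (norm_nonneg _) (norm_nonneg _)
        nlinarith [norm_nonneg (T (e + t • y))]
      rw [mul_pow, hL, hR] at hsq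
      nlinarith [hsq]
    have h1 := key (-q / (p + 1))
    have hp1 : (0:ℝ) < p + 1 := by linarith
    rcases eq_or_ne q 0 with h | h
    · exact h
    · exfalso
      have h2 : (0:ℝ) < q^2 * (p + 2) / (p+1)^2 := by positivity
      have h3 : 2 * (-q / (p + 1)) * q + (-q / (p + 1)) ^ 2 * p
          = -(q^2 * (p + 2) / (p+1)^2) := by field_simp; ring
      rw [h3] at h1
      linarith
  intro y
  have hd := decomp2 e y he
  have h1 : ⟪T e, T y⟫ = ⟪y, e⟫ * ⟪T e, T e⟫ + ⟪y, rot2 e⟫ * ⟪T e, T (rot2 e)⟫ := by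
    conv_lhs => rw [hd]
    rw [map_add, map_smul, map_smul, inner_add_right, real_inner_smul_right,
      real_inner_smul_right]
  rw [h1, horth (rot2 e) (rot2_inner e), real_inner_self_eq_norm_sq, real_inner_comm e y]
  ring

lemma min_expand (A : Matrix (Fin 2) (Fin 2) ℝ) (e : V2) (he : ‖e‖ = 1)
    (hmin : ∀ x : V2, ‖x‖ = 1 → ‖Matrix.toEuclideanLin A e‖ ≤ ‖Matrix.toEuclideanLin A x‖)
    (x : V2) :
    ‖Matrix.toEuclideanLin A x‖ ^ 2 = ⟪x, e⟫ ^ 2 * ‖Matrix.toEuclideanLin A e‖ ^ 2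
      + ⟪x, rot2 e⟫ ^ 2 * ‖Matrix.toEuclideanLin A (rot2 e)‖ ^ 2 := by
  set T := Matrix.toEuclideanLin A with hT
  have hd := decomp2 e x he
  have hTf : ⟪T e, T (rot2 e)⟫ = 0 := by
    rw [min_crit A e he hmin (rot2 e), rot2_inner e]; ring
  conv_lhs => rw [hd]
  rw [map_add, map_smul, map_smul, @norm_add_sq_real, real_inner_smul_left,
    real_inner_smul_right, hTf, norm_smul, norm_smul]
  simp only [mul_pow, Real.norm_eq_abs, sq_abs]
  ring

lemma lagrange_det (A : Matrix (Fin 2) (Fin 2) ℝ) (e : V2) (he : ‖e‖ = 1)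
    (hTf : ⟪Matrix.toEuclideanLin A e, Matrix.toEuclideanLin A (rot2 e)⟫ = 0) :
    A.det ^ 2 = ‖Matrix.toEuclideanLin A e‖ ^ 2 * ‖Matrix.toEuclideanLin A (rot2 e)‖ ^ 2 := by
  have hu : e 0 ^ 2 + e 1 ^ 2 = 1 := by rw [← normsq2, he]; norm_num
  rw [inner2, tEL_apply0, tEL_apply0, tEL_apply1, tEL_apply1, rot2_apply0, rot2_apply1] at hTf
  rw [normsq2, normsq2, tEL_apply0, tEL_apply0, tEL_apply1, tEL_apply1,
    rot2_apply0, rot2_apply1, Matrix.det_fin_two]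
  linear_combination (-((A 0 0 * e 0 + A 0 1 * e 1) * (A 0 0 * -e 1 + A 0 1 * e 0) +
      (A 1 0 * e 0 + A 1 1 * e 1) * (A 1 0 * -e 1 + A 1 1 * e 0))) * hTf +
    (-(A 0 0 * A 1 1 - A 0 1 * A 1 0)^2 * (e 0^2 + e 1^2 + 1)) * hu

lemma min_uniq (A : Matrix (Fin 2) (Fin 2) ℝ) (e : V2) (he : ‖e‖ = 1)
    (hmin : ∀ x : V2, ‖x‖ = 1 → ‖Matrix.toEuclideanLin A e‖ ≤ ‖Matrix.toEuclideanLin A x‖)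
    (hgap : ‖Matrix.toEuclideanLin A e‖ ^ 2 < ‖Matrix.toEuclideanLin A (rot2 e)‖ ^ 2)
    (e' : V2) (he' : ‖e'‖ = 1)
    (hmin' : ∀ x : V2, ‖x‖ = 1 → ‖Matrix.toEuclideanLin A e'‖ ≤ ‖Matrix.toEuclideanLin A x‖) :
    e' = e ∨ e' = -e := by
  set T := Matrix.toEuclideanLin A with hT
  have hs : ‖T e'‖ = ‖T e‖ := le_antisymm (hmin' e he) (hmin e' he')
  have hx := min_expand A e he hmin e'
  rw [← hT] at hx
  have hc := coeff_sq e e' he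
  rw [he'] at hc
  have hs2 : ‖T e'‖ ^ 2 = ‖T e‖ ^ 2 := by rw [hs]
  have key : ⟪e', rot2 e⟫ ^ 2 * (‖T (rot2 e)‖ ^ 2 - ‖T e‖ ^ 2) = 0 := by
    linear_combination (-1 : ℝ) * hx + hs2 + (-(‖T e‖^2)) * hc
  have hb2 : ⟪e', rot2 e⟫ ^ 2 = 0 := by
    rcases mul_eq_zero.mp key with h | h
    · exact h
    · exfalso; nlinarith
  have hb : ⟪e', rot2 e⟫ = 0 := by
    exact pow_eq_zero_iff (two_ne_zero) |>.mp hb2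
  have ha : (⟪e', e⟫ - 1) * (⟪e', e⟫ + 1) = 0 := by nlinarith [hc, hb]
  have hd := decomp2 e e' he
  rw [hb] at hd
  simp only [zero_smul, add_zero] at hd
  rcases mul_eq_zero.mp ha with h | h
  · left; rw [hd, show ⟪e', e⟫ = 1 by linarith, one_smul]
  · right; rw [hd, show ⟪e', e⟫ = -1 by linarith, neg_smul, one_smul]

lemma inner_decomp (A : Matrix (Fin 2) (Fin 2) ℝ) (e : V2) (he : ‖e‖ = 1) (x y : V2) :
    ⟪Matrix.toEuclideanLin A x, Matrix.toEuclideanLin A y⟫ =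
      ⟪x, e⟫ * ⟪Matrix.toEuclideanLin A e, Matrix.toEuclideanLin A y⟫ +
      ⟪x, rot2 e⟫ * ⟪Matrix.toEuclideanLin A (rot2 e), Matrix.toEuclideanLin A y⟫ := by
  conv_lhs => rw [decomp2 e x he]
  rw [map_add, map_smul, map_smul, inner_add_left, real_inner_smul_left, real_inner_smul_left]

lemma expand_sq (A : Matrix (Fin 2) (Fin 2) ℝ) (e : V2) (he : ‖e‖ = 1) (x : V2) :
    ‖Matrix.toEuclideanLin A x‖ ^ 2 =
      ⟪x, e⟫ ^ 2 * ‖Matrix.toEuclideanLin A e‖ ^ 2 +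
      2 * ⟪x, e⟫ * ⟪x, rot2 e⟫ * ⟪Matrix.toEuclideanLin A e, Matrix.toEuclideanLin A (rot2 e)⟫ +
      ⟪x, rot2 e⟫ ^ 2 * ‖Matrix.toEuclideanLin A (rot2 e)‖ ^ 2 := by
  conv_lhs => rw [decomp2 e x he]
  rw [map_add, map_smul, map_smul, @norm_add_sq_real, real_inner_smul_left,
    real_inner_smul_right, norm_smul, norm_smul]
  simp only [mul_pow, Real.norm_eq_abs, sq_abs]
  ring

/-- the key one-step stability estimate -/
lemma step_bound (K b : ℝ) (hK : 2 ≤ K) (hb : 0 < b) (hCb : 32 * K ^ 5 * b ≤ 1/2)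
    (A A' Mm : Matrix (Fin 2) (Fin 2) ℝ) (i : ℕ) (hi : 1 ≤ i)
    (hA' : A' = Mm * A)
    (hM : ∀ x : V2, ‖Matrix.toEuclideanLin Mm x‖ ≤ K * ‖x‖)
    (e e' : V2) (he : ‖e‖ = 1)
    (hmin : ∀ x : V2, ‖x‖ = 1 → ‖Matrix.toEuclideanLin A e‖ ≤ ‖Matrix.toEuclideanLin A x‖)
    (he' : ‖e'‖ = 1)
    (hmin' : ∀ x : V2, ‖x‖ = 1 → ‖Matrix.toEuclideanLin A' e'‖ ≤ ‖Matrix.toEuclideanLin A' x‖)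
    (hs : ‖Matrix.toEuclideanLin A e‖ ≤ (K * b) ^ i)
    (hAf : ‖Matrix.toEuclideanLin A (rot2 e)‖ ≤ K ^ i)
    (hexp' : ∃ B : V2, ‖B‖ = 1 ∧ 1 ≤ ‖Matrix.toEuclideanLin A' B‖)
    (hα : 0 ≤ ⟪e', e⟫) :
    ‖e' - e‖ ≤ 3 * K ^ 2 * (K ^ 2 * b) ^ i := by
  have hK0 : (0:ℝ) < K := by linarith
  have hK2 : (4:ℝ) ≤ K ^ 2 := by nlinarith only [hK]
  have hK3 : (8:ℝ) ≤ K ^ 3 := by nlinarith only [hK, hK2]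
  have hK5 : (32:ℝ) ≤ K ^ 5 := by nlinarith only [hK, hK2, hK3]
  set X : ℝ := (K ^ 2 * b) ^ i with hX
  have hX0 : 0 < X := by positivity
  have hb5 : b * (64 * K ^ 5) ≤ 1 := by nlinarith only [hCb]
  have hKb8 : 0 ≤ (K ^ 3 - 8) * (K ^ 2 * b) :=
    mul_nonneg (by linarith only [hK3]) (by positivity)
  have hKb1 : K ^ 2 * b ≤ 1 / 512 := by nlinarith only [hb5, hKb8]
  have hKb1' : K ^ 2 * b ≤ 1 := by linarith only [hKb1]
  have hXle : X ≤ K ^ 2 * b := by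
    rw [hX]
    have h := pow_le_pow_of_le_one (by positivity : (0:ℝ) ≤ K ^ 2 * b) hKb1' hi
    rw [pow_one] at h
    exact h
  have hK2X : K ^ 2 * X ≤ 1 / 128 := by
    have h1 : K ^ 2 * X ≤ K ^ 2 * (K ^ 2 * b) := by
      apply mul_le_mul_of_nonneg_left hXle (by positivity)
    have h2 : K ^ 4 * b * (64 * K) ≤ 1 := by nlinarith only [hb5]
    nlinarith only [h1, h2, hK0, hK, hb]
  have hX1 : X ≤ 1 := by nlinarith only [hXle, hK2X, hK2, hX0]
  have hY0 : (0:ℝ) ≤ K ^ 2 * X := by positivity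
  -- abbreviations
  set T := Matrix.toEuclideanLin A with hT
  set T' := Matrix.toEuclideanLin A' with hT'
  have hcomp : ∀ x : V2, T' x = Matrix.toEuclideanLin Mm (T x) := by
    intro x; rw [hT', hA', tEL_mul, hT]
  set f := rot2 e with hf
  have hfn : ‖f‖ = 1 := by rw [hf, rot2_norm, he]
  set α := ⟪e', e⟫ with hαd
  set β := ⟪e', f⟫ with hβd
  have hab : α ^ 2 + β ^ 2 = 1 := by
    have := coeff_sq e e' he; rw [he'] at this; rw [hαd, hβd, hf]; simpa using this
  have hα1 : α ≤ 1 := by nlinarith only [hab, sq_nonneg β, hα]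
  -- norm bounds
  have hTe : ‖T e‖ ≤ K * X := by
    have h1 : (K * b) ^ i ≤ (K ^ 2 * b) ^ i := by
      apply pow_le_pow_left₀ (by positivity)
      have h0 : 0 ≤ b * (K ^ 2 - K) := mul_nonneg hb.le (by nlinarith only [hK])
      linarith only [h0]
    have h2 : X ≤ K * X := by nlinarith only [hX0, hK]
    rw [← hX] at h1
    linarith only [hs, h1, h2]
  have ha' : ‖T' e‖ ≤ K ^ 2 * X := by
    rw [hcomp]
    calc ‖Matrix.toEuclideanLin Mm (T e)‖ ≤ K * ‖T e‖ := hM _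
    _ ≤ K * (K * X) := by
      apply mul_le_mul_of_nonneg_left hTe (le_of_lt hK0)
    _ = K ^ 2 * X := by ring
  have ha'' : ‖T' e‖ ≤ K * (K * b) ^ i := by
    rw [hcomp]
    calc ‖Matrix.toEuclideanLin Mm (T e)‖ ≤ K * ‖T e‖ := hM _
    _ ≤ K * (K * b) ^ i := mul_le_mul_of_nonneg_left hs (le_of_lt hK0)
  set c' : ℝ := ⟪T' e, T' f⟫ with hc'd
  have hT'f : ‖T' f‖ ≤ K * K ^ i := by
    rw [hcomp]
    calc ‖Matrix.toEuclideanLin Mm (T f)‖ ≤ K * ‖T f‖ := hM _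
    _ ≤ K * K ^ i := mul_le_mul_of_nonneg_left hAf (le_of_lt hK0)
  have hc' : |c'| ≤ K ^ 2 * X := by
    calc |c'| ≤ ‖T' e‖ * ‖T' f‖ := abs_real_inner_le_norm _ _
    _ ≤ (K * (K * b) ^ i) * (K * K ^ i) := by
      apply mul_le_mul ha'' hT'f (norm_nonneg _) (by positivity)
    _ = K ^ 2 * ((K * b) ^ i * K ^ i) := by ring
    _ = K ^ 2 * X := by rw [← mul_pow, hX]; ring_nf
  -- lower bound for d' := ‖T' f‖ ^ 2
  set d' : ℝ := ‖T' f‖ ^ 2 with hd'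
  have hd'0 : 0 ≤ d' := sq_nonneg _
  have hdlow : 1 - (K ^ 2 * X) * (K ^ 2 * X) - K ^ 2 * X ≤ d' := by
    obtain ⟨B, hB1, hB2⟩ := hexp'
    have hex := expand_sq A' e he B
    rw [← hT', ← hf, ← hc'd, ← hd'] at hex
    have hcoef : ⟪B, e⟫ ^ 2 + ⟪B, f⟫ ^ 2 = 1 := by
      have := coeff_sq e B he; rw [hB1] at this; rw [hf]; simpa using this
    have h1 : 1 ≤ ‖T' B‖ ^ 2 := by nlinarith only [hB2, norm_nonneg (T' B)]
    have hBe2 : ⟪B, e⟫ ^ 2 ≤ 1 := by linarith only [hcoef, sq_nonneg ⟪B, f⟫]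
    have hBf2 : ⟪B, f⟫ ^ 2 ≤ 1 := by linarith only [hcoef, sq_nonneg ⟪B, e⟫]
    have hcross : 2 * ⟪B, e⟫ * ⟪B, f⟫ * c' ≤ |c'| := by
      have h2 : 2 * ⟪B, e⟫ * ⟪B, f⟫ ≤ 1 := by
        nlinarith only [sq_nonneg (⟪B, e⟫ - ⟪B, f⟫), hcoef]
      have h3 : -1 ≤ 2 * ⟪B, e⟫ * ⟪B, f⟫ := by
        nlinarith only [sq_nonneg (⟪B, e⟫ + ⟪B, f⟫), hcoef]
      cases le_or_gt 0 c' with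
      | inl h => nlinarith only [h2, h3, h, abs_of_nonneg h]
      | inr h => nlinarith only [h2, h3, h, abs_of_neg h]
    have hTe2 : ‖T' e‖ ^ 2 ≤ (K ^ 2 * X) ^ 2 := by
      nlinarith only [norm_nonneg (T' e), ha', hY0]
    have hterm1 : ⟪B, e⟫ ^ 2 * ‖T' e‖ ^ 2 ≤ (K ^ 2 * X) ^ 2 := by
      nlinarith only [sq_nonneg ⟪B, e⟫, sq_nonneg (‖T' e‖), hBe2, hTe2]
    have hterm3 : ⟪B, f⟫ ^ 2 * d' ≤ d' := by
      nlinarith only [sq_nonneg ⟪B, f⟫, hd'0, hBf2]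
    rw [hex] at h1
    linarith only [h1, hterm1, hterm3, hcross, hc']
  have hdlow2 : 1/2 ≤ d' - ‖T' e'‖ ^ 2 := by
    have hlam : ‖T' e'‖ ^ 2 ≤ (K ^ 2 * X) ^ 2 := by
      have h1 : ‖T' e'‖ ≤ ‖T' e‖ := hmin' e he
      nlinarith only [norm_nonneg (T' e'), norm_nonneg (T' e), ha', h1, hY0]
    have hsq : (K ^ 2 * X) ^ 2 ≤ (1/128) * (1/128) := by
      nlinarith only [hK2X, hY0]
    linarith only [hdlow, hlam, hsq, hK2X]
  -- the eigen-relation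
  have hrel : ‖T' e'‖ ^ 2 * β = α * c' + β * d' := by
    have h1 := min_crit A' e' he' hmin' f
    have h2 := inner_decomp A' e he e' f
    rw [← hT'] at h1 h2
    rw [← hc'd] at h2
    have h3 : ⟪T' f, T' f⟫ = d' := by rw [hd', real_inner_self_eq_norm_sq]
    rw [h3] at h2
    rw [h2] at h1
    rw [← hf, ← hαd, ← hβd] at h1
    linarith only [h1]
  -- bound |β|
  have hβb : |β| ≤ 2 * (K ^ 2 * X) := by
    have h1 : β * (d' - ‖T' e'‖ ^ 2) = -(α * c') := by linarith only [hrel]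
    have h2 : |β| * (d' - ‖T' e'‖ ^ 2) = |α * c'| := by
      rw [← abs_of_nonneg (by linarith only [hdlow2] : (0:ℝ) ≤ d' - ‖T' e'‖ ^ 2),
        ← abs_mul, h1, abs_neg]
    have h3 : |α * c'| ≤ K ^ 2 * X := by
      rw [abs_mul, abs_of_nonneg hα]
      have h4 := mul_le_mul hα1 hc' (abs_nonneg c') zero_le_one
      linarith only [h4]
    have h5 : |β| * (1/2) ≤ |β| * (d' - ‖T' e'‖ ^ 2) :=
      mul_le_mul_of_nonneg_left hdlow2 (abs_nonneg β)
    linarith only [h5, h2, h3]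
  -- conclude
  have hdiff : ‖e' - e‖ ^ 2 = 2 - 2 * α := by
    rw [@norm_sub_sq_real, he, he', hαd]; ring
  have hβsq : β ^ 2 ≤ (2 * (K ^ 2 * X)) ^ 2 := by
    nlinarith only [abs_nonneg β, sq_abs β, hβb]
  have hfinal : ‖e' - e‖ ^ 2 ≤ 2 * β ^ 2 := by
    rw [hdiff]
    nlinarith only [hab, hα, hα1]
  have h9 : ‖e' - e‖ ^ 2 ≤ (3 * K ^ 2 * X) ^ 2 := by
    calc ‖e' - e‖ ^ 2 ≤ 2 * β ^ 2 := hfinal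
    _ ≤ 2 * (2 * (K ^ 2 * X)) ^ 2 := by linarith only [hβsq]
    _ ≤ (3 * K ^ 2 * X) ^ 2 := by nlinarith only [hY0]
  nlinarith only [norm_nonneg (e' - e), h9, hY0]

/-- Stability of most contracted directions for products of expanding matrices
with small determinant (Lemma on e_i along orbits in the hyperbolic region). -/
theorem stmt15 (K b : ℝ) (hK : 2 ≤ K) (hb : 0 < b) (n : ℕ) (hn : 1 ≤ n)
    (M : ℕ → Matrix (Fin 2) (Fin 2) ℝ)
    (hnorm : ∀ i, 1 ≤ i → i ≤ n → ∀ x : EuclideanSpace ℝ (Fin 2),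
      ‖Matrix.toEuclideanLin (M i) x‖ ≤ K * ‖x‖)
    (hdet : ∀ i, 1 ≤ i → i ≤ n → |(M i).det| ≤ K * b)
    (P : ℕ → Matrix (Fin 2) (Fin 2) ℝ)
    (hP1 : P 1 = M 1) (hPs : ∀ i, P (i + 1) = M (i + 1) * P i)
    (hexp : ∀ i, 1 ≤ i → i ≤ n → ∃ x : EuclideanSpace ℝ (Fin 2),
      ‖x‖ = 1 ∧ 1 ≤ ‖Matrix.toEuclideanLin (P i) x‖) :
    ∃ C : ℝ, C = 32 * K ^ 5 ∧
      (C * b ≤ 1/2 → ∃ e : ℕ → EuclideanSpace ℝ (Fin 2),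
        (∀ i, 1 ≤ i → i ≤ n →
          ‖e i‖ = 1 ∧
          (∀ x : EuclideanSpace ℝ (Fin 2), ‖x‖ = 1 →
            ‖Matrix.toEuclideanLin (P i) (e i)‖ ≤ ‖Matrix.toEuclideanLin (P i) x‖) ∧
          ‖Matrix.toEuclideanLin (P i) (e i)‖ ≤ (K * b) ^ i ∧
          (∀ e' : EuclideanSpace ℝ (Fin 2), ‖e'‖ = 1 →
            (∀ x : EuclideanSpace ℝ (Fin 2), ‖x‖ = 1 →
              ‖Matrix.toEuclideanLin (P i) e'‖ ≤ ‖Matrix.toEuclideanLin (P i) x‖) →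
            e' = e i ∨ e' = -(e i))) ∧
        (∀ i, 1 ≤ i → i < n → ‖e (i + 1) - e i‖ ≤ (C * b) ^ i) ∧
        (∀ i, 1 ≤ i → i ≤ n → ‖Matrix.toEuclideanLin (P i) (e n)‖ ≤ (C * b) ^ i)) := by
  classical
  refine ⟨32 * K ^ 5, rfl, fun hCb => ?_⟩
  have hK0 : (0:ℝ) < K := by linarith
  have hK2 : (4:ℝ) ≤ K ^ 2 := by nlinarith only [hK]
  have hK3 : (8:ℝ) ≤ K ^ 3 := by nlinarith only [hK, hK2]
  have hK5 : (32:ℝ) ≤ K ^ 5 := by nlinarith only [hK, hK2, hK3]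
  have hb5 : b * (64 * K ^ 5) ≤ 1 := by nlinarith only [hCb]
  have hKb8 : 0 ≤ (K ^ 3 - 8) * (K ^ 2 * b) :=
    mul_nonneg (by linarith only [hK3]) (by positivity)
  have hK2b : K ^ 2 * b ≤ 1 / 512 := by nlinarith only [hb5, hKb8]
  have hKb : K * b ≤ 1 / 512 := by
    have h0 : 0 ≤ b * (K ^ 2 - K) := mul_nonneg hb.le (by nlinarith only [hK])
    linarith only [h0, hK2b]
  have hKb0 : 0 < K * b := by positivity
  -- norm bound on products
  have hPnorm : ∀ i, 1 ≤ i → i ≤ n → ∀ x : V2,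
      ‖Matrix.toEuclideanLin (P i) x‖ ≤ K ^ i * ‖x‖ := by
    intro i hi
    induction i, hi using Nat.le_induction with
    | base =>
      intro _ x
      rw [hP1, pow_one]
      exact hnorm 1 le_rfl hn x
    | succ i hi IH =>
      intro hle x
      have hle' : i ≤ n := by omega
      rw [hPs i, tEL_mul]
      calc ‖Matrix.toEuclideanLin (M (i+1)) (Matrix.toEuclideanLin (P i) x)‖
          ≤ K * ‖Matrix.toEuclideanLin (P i) x‖ := hnorm (i+1) (by omega) hle _
      _ ≤ K * (K ^ i * ‖x‖) :=
        mul_le_mul_of_nonneg_left (IH hle' x) hK0.le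
      _ = K ^ (i+1) * ‖x‖ := by rw [pow_succ]; ring
  -- determinant bound on products
  have hPdet : ∀ i, 1 ≤ i → i ≤ n → |(P i).det| ≤ (K * b) ^ i := by
    intro i hi
    induction i, hi using Nat.le_induction with
    | base =>
      intro _
      rw [hP1, pow_one]
      exact hdet 1 le_rfl hn
    | succ i hi IH =>
      intro hle
      have hle' : i ≤ n := by omega
      rw [hPs i, Matrix.det_mul, abs_mul, pow_succ]
      have h1 := hdet (i+1) (by omega) hle
      have h2 := IH hle'
      calc |(M (i+1)).det| * |(P i).det| ≤ (K * b) * (K * b) ^ i :=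
        mul_le_mul h1 h2 (abs_nonneg _) hKb0.le
      _ = (K * b) ^ i * (K * b) := by ring
  -- choose minimizers
  choose ε hε1 hε2 using fun i => exists_min (P i)
  -- sign-corrected sequence
  let e : ℕ → V2 := fun m => Nat.rec (ε 0)
    (fun i prev => if ⟪ε (i+1), prev⟫ < 0 then -ε (i+1) else ε (i+1)) m
  have he_eq : ∀ i, e (i+1) = if ⟪ε (i+1), e i⟫ < 0 then -ε (i+1) else ε (i+1) :=
    fun i => rfl
  have hepm : ∀ i, e i = ε i ∨ e i = -ε i := by
    intro i
    cases i with
    | zero => left; rfl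
    | succ i =>
      rw [he_eq i]
      split
      · right; rfl
      · left; rfl
  have heu : ∀ i, ‖e i‖ = 1 := by
    intro i
    rcases hepm i with h | h <;> rw [h]
    · exact hε1 i
    · rw [norm_neg]; exact hε1 i
  have hemin : ∀ i, ∀ x : V2, ‖x‖ = 1 →
      ‖Matrix.toEuclideanLin (P i) (e i)‖ ≤ ‖Matrix.toEuclideanLin (P i) x‖ := by
    intro i x hx
    rcases hepm i with h | h <;> rw [h]
    · exact hε2 i x hx
    · rw [map_neg, norm_neg]; exact hε2 i x hx
  have hα : ∀ i, 0 ≤ ⟪e (i+1), e i⟫ := by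
    intro i
    rw [he_eq i]
    split
    · rename_i h
      rw [inner_neg_left]
      linarith only [h]
    · rename_i h
      linarith only [not_lt.mp h]
  -- key per-index facts
  have key : ∀ i, 1 ≤ i → i ≤ n →
      ‖Matrix.toEuclideanLin (P i) (e i)‖ ≤ (K * b) ^ i ∧
      1 ≤ ‖Matrix.toEuclideanLin (P i) (rot2 (e i))‖ ∧
      ‖Matrix.toEuclideanLin (P i) (e i)‖ ^ 2 <
        ‖Matrix.toEuclideanLin (P i) (rot2 (e i))‖ ^ 2 := by
    intro i h1 h2
    set T := Matrix.toEuclideanLin (P i) with hT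
    have hfu : ‖rot2 (e i)‖ = 1 := by rw [rot2_norm, heu i]
    have hsF : ‖T (e i)‖ ≤ ‖T (rot2 (e i))‖ := hemin i _ hfu
    have hs0 : 0 ≤ ‖T (e i)‖ := norm_nonneg _
    have hF0 : 0 ≤ ‖T (rot2 (e i))‖ := norm_nonneg _
    obtain ⟨B, hB1, hB2⟩ := hexp i h1 h2
    have hexpand := min_expand (P i) (e i) (heu i) (hemin i) B
    rw [← hT] at hexpand
    have hcoef : ⟪B, e i⟫ ^ 2 + ⟪B, rot2 (e i)⟫ ^ 2 = 1 := by
      have := coeff_sq (e i) B (heu i); rw [hB1] at this; simpa using this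
    have hB2sq : 1 ≤ ‖T B‖ ^ 2 := by nlinarith only [hB2, norm_nonneg (T B)]
    have hFs : 0 ≤ ‖T (rot2 (e i))‖ ^ 2 - ‖T (e i)‖ ^ 2 := by
      nlinarith only [hsF, hs0, hF0]
    have h4 : 0 ≤ ⟪B, e i⟫ ^ 2 * (‖T (rot2 (e i))‖ ^ 2 - ‖T (e i)‖ ^ 2) :=
      mul_nonneg (sq_nonneg _) hFs
    have h5 : (⟪B, e i⟫ ^ 2 + ⟪B, rot2 (e i)⟫ ^ 2) * ‖T (rot2 (e i))‖ ^ 2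
        = ‖T (rot2 (e i))‖ ^ 2 := by rw [hcoef, one_mul]
    have hF2 : 1 ≤ ‖T (rot2 (e i))‖ ^ 2 := by
      nlinarith only [hB2sq, hexpand, h4, h5]
    have hF : 1 ≤ ‖T (rot2 (e i))‖ := by
      nlinarith only [hF2, hF0]
    -- determinant
    have hTf0 : ⟪T (e i), T (rot2 (e i))⟫ = 0 := by
      rw [hT, min_crit (P i) (e i) (heu i) (hemin i) (rot2 (e i)), rot2_inner]; ring
    have hdet2 := lagrange_det (P i) (e i) (heu i) (by rw [← hT]; exact hTf0)
    rw [← hT] at hdet2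
    have hdP := hPdet i h1 h2
    have h6 : ‖T (e i)‖ ^ 2 ≤ ‖T (e i)‖ ^ 2 * ‖T (rot2 (e i))‖ ^ 2 := by
      nlinarith only [hF2, sq_nonneg (‖T (e i)‖)]
    have h7 : ‖T (e i)‖ ^ 2 ≤ ((K * b) ^ i) ^ 2 := by
      nlinarith only [h6, hdet2, sq_abs ((P i).det), hdP, abs_nonneg ((P i).det)]
    have hsle : ‖T (e i)‖ ≤ (K * b) ^ i := by
      nlinarith only [h7, hs0, pow_nonneg hKb0.le i]
    refine ⟨hsle, hF, ?_⟩
    have h8 : (K * b) ^ i < 1 := by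
      apply pow_lt_one₀ hKb0.le _ (by omega)
      linarith only [hKb]
    nlinarith only [hsle, hs0, h8, hF2, pow_nonneg hKb0.le i]
  -- per-step estimate
  have hstep : ∀ i, 1 ≤ i → i < n →
      ‖e (i+1) - e i‖ ≤ 3 * K ^ 2 * (K ^ 2 * b) ^ i := by
    intro i h1 h2
    have hAf : ‖Matrix.toEuclideanLin (P i) (rot2 (e i))‖ ≤ K ^ i := by
      have := hPnorm i h1 (by omega) (rot2 (e i))
      rw [rot2_norm, heu i, mul_one] at this
      exact this
    exact step_bound K b hK hb hCb (P i) (P (i+1)) (M (i+1)) i h1 (hPs i)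
      (hnorm (i+1) (by omega) (by omega)) (e i) (e (i+1)) (heu i) (hemin i)
      (heu (i+1)) (hemin (i+1)) ((key i h1 (by omega)).1) hAf
      (hexp (i+1) (by omega) (by omega)) (hα i)
  -- step bound vs (Cb)^i
  have hstep' : ∀ i, 1 ≤ i → i < n →
      ‖e (i+1) - e i‖ ≤ (32 * K ^ 5 * b) ^ i := by
    intro i h1 h2
    have hx := hstep i h1 h2
    have he1 : (32 * K ^ 5 * b) ^ i = (32 * K ^ 3) ^ i * (K ^ 2 * b) ^ i := by
      rw [← mul_pow]; ring_nf
    have he2 : 32 * K ^ 3 ≤ (32 * K ^ 3) ^ i :=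
      le_self_pow₀ (by nlinarith only [hK3]) (by omega)
    have he3 : 3 * K ^ 2 ≤ 32 * K ^ 3 := by nlinarith only [hK, hK2]
    have he4 : 3 * K ^ 2 * (K ^ 2 * b) ^ i ≤ (32 * K ^ 3) ^ i * (K ^ 2 * b) ^ i :=
      mul_le_mul_of_nonneg_right (he3.trans he2) (by positivity)
    rw [he1]
    linarith only [hx, he4]
  -- telescoping
  have htel : ∀ i, 1 ≤ i → ∀ j, i ≤ j → j ≤ n →
      ‖e j - e i‖ ≤ 6 * K ^ 2 * ((K ^ 2 * b) ^ i - (K ^ 2 * b) ^ j) := by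
    intro i h1 j hij
    induction j, hij using Nat.le_induction with
    | base =>
      intro _
      simp [sub_self]
    | succ j hij IH =>
      intro hle
      have hle' : j ≤ n := by omega
      have hIH := IH hle'
      have hstepj := hstep j (by omega) (by omega)
      have htri : ‖e (j+1) - e i‖ ≤ ‖e (j+1) - e j‖ + ‖e j - e i‖ := by
        have hsplit : e (j+1) - e i = (e (j+1) - e j) + (e j - e i) := by abel
        rw [hsplit]
        exact norm_add_le _ _
      have hgeo : (K ^ 2 * b) ^ (j+1) = (K ^ 2 * b) * (K ^ 2 * b) ^ j := by
        rw [pow_succ]; ring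
      have hhalf : 6 * K ^ 2 * (K ^ 2 * b) ^ (j+1) ≤ 3 * K ^ 2 * (K ^ 2 * b) ^ j := by
        rw [hgeo]
        have hp0 : (0:ℝ) ≤ (K ^ 2 * b) ^ j := by positivity
        have hqz : 0 ≤ K ^ 2 * (K ^ 2 * b) ^ j := by positivity
        nlinarith only [hK2b, hqz]
      linarith only [htri, hIH, hstepj, hhalf]
  -- final bound
  have hlast : ∀ i, 1 ≤ i → i ≤ n →
      ‖Matrix.toEuclideanLin (P i) (e n)‖ ≤ (32 * K ^ 5 * b) ^ i := by
    intro i h1 h2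
    set T := Matrix.toEuclideanLin (P i) with hT
    have hdiffn : ‖e n - e i‖ ≤ 6 * K ^ 2 * (K ^ 2 * b) ^ i := by
      have := htel i h1 n h2 le_rfl
      have hp0 : (0:ℝ) ≤ (K ^ 2 * b) ^ n := by positivity
      nlinarith only [this, hp0, hK2]
    have htri : ‖T (e n)‖ ≤ ‖T (e i)‖ + ‖T (e n - e i)‖ := by
      have hsplit : e n = e i + (e n - e i) := by abel
      calc ‖T (e n)‖ = ‖T (e i) + T (e n - e i)‖ := by rw [← map_add, ← hsplit]
      _ ≤ ‖T (e i)‖ + ‖T (e n - e i)‖ := norm_add_le _ _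
    have hb1 : ‖T (e i)‖ ≤ (K * b) ^ i := (key i h1 h2).1
    have hb2 : ‖T (e n - e i)‖ ≤ K ^ i * ‖e n - e i‖ := hPnorm i h1 h2 _
    have hb3 : K ^ i * ‖e n - e i‖ ≤ K ^ i * (6 * K ^ 2 * (K ^ 2 * b) ^ i) :=
      mul_le_mul_of_nonneg_left hdiffn (by positivity)
    have hb4 : K ^ i * (6 * K ^ 2 * (K ^ 2 * b) ^ i) = 6 * K ^ 2 * (K ^ 3 * b) ^ i := by
      rw [show (K ^ 3 * b) = K * (K ^ 2 * b) by ring, mul_pow]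
      ring
    have hb5' : (K * b) ^ i ≤ (K ^ 3 * b) ^ i := by
      apply pow_le_pow_left₀ (by positivity)
      have h0 : 0 ≤ b * (K ^ 3 - K) := mul_nonneg hb.le (by nlinarith only [hK, hK2])
      linarith only [h0]
    have hc1 : (32 * K ^ 5 * b) ^ i = (32 * K ^ 2) ^ i * (K ^ 3 * b) ^ i := by
      rw [← mul_pow]; ring_nf
    have hc2 : 32 * K ^ 2 ≤ (32 * K ^ 2) ^ i :=
      le_self_pow₀ (by nlinarith only [hK2]) (by omega)
    have hc3 : (1 + 6 * K ^ 2) * (K ^ 3 * b) ^ i ≤ (32 * K ^ 2) ^ i * (K ^ 3 * b) ^ i := by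
      apply mul_le_mul_of_nonneg_right _ (by positivity)
      calc 1 + 6 * K ^ 2 ≤ 32 * K ^ 2 := by nlinarith only [hK2]
      _ ≤ (32 * K ^ 2) ^ i := hc2
    rw [hc1]
    linarith only [htri, hb1, hb2, hb3, hb4.le, hb4.ge, hb5', hc3]
  refine ⟨e, fun i h1 h2 => ⟨heu i, hemin i, (key i h1 h2).1, ?_⟩, hstep', hlast⟩
  intro e' he' hmin'
  exact min_uniq (P i) (e i) (heu i) (hemin i) (key i h1 h2).2.2 e' he' hmin'

end StmtAux
end

section
/- Let R : ℝ → ℝ be continuous, and suppose there exist constants C, ξ > 0 such that |R(s)| ≤ C·e^{−ξ|s|} for all s ∈ ℝ. If R is not identically zero, then the set of real numbers ω for which both ∫_{−∞}^{∞} R(s)·cos(ωs) ds = 0 and ∫_{−∞}^{∞} R(s)·sin(ωs) ds = 0 has no accumulation point in ℝ (it is a discrete subset of ℝ). -/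
open MeasureTheory Filter
open Set Real

lemma myint_exp_abs {c : ℝ} (hc : 0 < c) :
    Integrable (fun x : ℝ => Real.exp (-c * |x|)) := by
  have h : IntegrableOn (fun x : ℝ => Real.exp (-c * |x|)) (Ioi 0) := by
    refine (exp_neg_integrableOn_Ioi 0 hc).congr_fun (fun x hx => ?_) measurableSet_Ioi
    rw [abs_of_pos hx]
  rw [← integrableOn_univ, ← Iio_union_Ici (a := (0:ℝ)), integrableOn_union,
    integrableOn_Ici_iff_integrableOn_Ioi]
  refine ⟨?_, h⟩
  rw [← (Measure.measurePreserving_neg (volume : Measure ℝ)).integrableOn_comp_preimage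
      (Homeomorph.neg ℝ).measurableEmbedding]
  simp only [Function.comp_def, abs_neg, neg_preimage, neg_Iio, neg_zero]
  exact h

lemma mynorm_aux (r : ℝ) (z : ℂ) (s : ℝ) :
    ‖(r:ℂ) * Complex.exp (z * s * Complex.I)‖ = |r| * Real.exp (-(z.im * s)) := by
  rw [norm_mul, Complex.norm_real, Complex.norm_exp]
  norm_num [Complex.mul_re, Complex.mul_im]

lemma mybound_aux {R : ℝ → ℝ} {C ξ : ℝ} (hdecay : ∀ s : ℝ, |R s| ≤ C * Real.exp (-ξ * |s|))
    (z : ℂ) (s : ℝ) :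
    ‖(R s : ℂ) * Complex.exp (z * s * Complex.I)‖ ≤ C * Real.exp (-(ξ - |z.im|) * |s|) := by
  rw [mynorm_aux]
  have h1 : Real.exp (-(z.im * s)) ≤ Real.exp (|z.im| * |s|) := by
    apply Real.exp_le_exp.2
    calc -(z.im * s) ≤ |z.im * s| := neg_le_abs _
    _ = |z.im| * |s| := abs_mul _ _
  calc |R s| * Real.exp (-(z.im * s)) ≤ (C * Real.exp (-ξ * |s|)) * Real.exp (|z.im| * |s|) := by
        apply mul_le_mul (hdecay s) h1 (Real.exp_pos _).le
        exact le_trans (abs_nonneg _) (hdecay s)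
    _ = C * Real.exp (-(ξ - |z.im|) * |s|) := by
        rw [mul_assoc, ← Real.exp_add]; ring_nf

lemma myintegrable {R : ℝ → ℝ} {C ξ : ℝ} (hR : Continuous R) (hξ : 0 < ξ)
    (hdecay : ∀ s : ℝ, |R s| ≤ C * Real.exp (-ξ * |s|)) {z : ℂ} (hz : |z.im| < ξ) :
    Integrable (fun s : ℝ => (R s : ℂ) * Complex.exp (z * s * Complex.I)) := by
  have hcont : Continuous (fun s : ℝ => (R s : ℂ) * Complex.exp (z * s * Complex.I)) := by
    fun_prop
  have hbint : Integrable (fun s : ℝ => C * Real.exp (-(ξ - |z.im|) * |s|)) :=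
    (myint_exp_abs (show (0:ℝ) < ξ - |z.im| by linarith)).const_mul C
  exact hbint.mono' hcont.aestronglyMeasurable
    (Eventually.of_forall fun s => mybound_aux hdecay z s)

lemma myderiv {R : ℝ → ℝ} {C ξ : ℝ} (hR : Continuous R) (hC : 0 < C) (hξ : 0 < ξ)
    (hdecay : ∀ s : ℝ, |R s| ≤ C * Real.exp (-ξ * |s|)) {z₀ : ℂ} (hz : |z₀.im| < ξ) :
    HasDerivAt (fun z : ℂ => ∫ s : ℝ, (R s : ℂ) * Complex.exp (z * s * Complex.I))
      (∫ s : ℝ, (R s : ℂ) * (s * Complex.I) * Complex.exp (z₀ * s * Complex.I)) z₀ := by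
  set ε : ℝ := (ξ - |z₀.im|) / 2 with hε
  have hε_pos : 0 < ε := by simp only [hε]; linarith
  have key : ∀ z ∈ Metric.ball z₀ ε, |z.im| < ξ - ε := by
    intro z hz'
    have h1 : |z.im - z₀.im| ≤ ‖z - z₀‖ := by
      simpa using Complex.abs_im_le_norm (z - z₀)
    have h2 : ‖z - z₀‖ < ε := by simpa [Metric.mem_ball, dist_eq_norm] using hz'
    have := abs_sub_abs_le_abs_sub z.im z₀.im
    simp only [hε] at *
    linarith
  have hb : ∀ (z : ℂ), |z.im| < ξ - ε → ∀ s : ℝ,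
      ‖(R s : ℂ) * (s * Complex.I) * Complex.exp (z * s * Complex.I)‖
        ≤ (2 * C / ε) * Real.exp (-(ε / 2) * |s|) := by
    intro z hzb s
    have h1 : ‖(R s : ℂ) * (s * Complex.I) * Complex.exp (z * s * Complex.I)‖
        = |s| * ‖(R s : ℂ) * Complex.exp (z * s * Complex.I)‖ := by
      rw [show (R s : ℂ) * (s * Complex.I) * Complex.exp (z * s * Complex.I)
          = (s * Complex.I) * ((R s : ℂ) * Complex.exp (z * s * Complex.I)) by ring,
        norm_mul, norm_mul, Complex.norm_real, Complex.norm_I,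
        mul_one, Real.norm_eq_abs]
    rw [h1]
    have h2 : ‖(R s : ℂ) * Complex.exp (z * s * Complex.I)‖ ≤ C * Real.exp (-ε * |s|) := by
      refine (mybound_aux hdecay z s).trans ?_
      have : -(ξ - |z.im|) * |s| ≤ -ε * |s| := by nlinarith [abs_nonneg s]
      exact mul_le_mul_of_nonneg_left (Real.exp_le_exp.2 this) hC.le
    have h3 : |s| ≤ (2 / ε) * Real.exp ((ε / 2) * |s|) := by
      have := Real.add_one_le_exp ((ε / 2) * |s|)
      have h4 : (ε / 2) * |s| ≤ Real.exp ((ε / 2) * |s|) := by nlinarith [abs_nonneg s]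
      have h5 : |s| = (2 / ε) * ((ε / 2) * |s|) := by field_simp
      calc |s| = (2 / ε) * ((ε / 2) * |s|) := h5
        _ ≤ (2 / ε) * Real.exp ((ε / 2) * |s|) :=
            mul_le_mul_of_nonneg_left h4 (by positivity)
    calc |s| * ‖(R s : ℂ) * Complex.exp (z * s * Complex.I)‖
        ≤ ((2 / ε) * Real.exp ((ε / 2) * |s|)) * (C * Real.exp (-ε * |s|)) := by
          apply mul_le_mul h3 h2 (norm_nonneg _)
          positivity
      _ = (2 * C / ε) * Real.exp (-(ε / 2) * |s|) := by
          rw [mul_mul_mul_comm, ← Real.exp_add]; ring_nf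
  have main := hasDerivAt_integral_of_dominated_loc_of_deriv_le (μ := volume)
    (F := fun z s => (R s : ℂ) * Complex.exp (z * s * Complex.I))
    (F' := fun z s => (R s : ℂ) * (s * Complex.I) * Complex.exp (z * s * Complex.I))
    (x₀ := z₀) (bound := fun s => (2 * C / ε) * Real.exp (-(ε / 2) * |s|)) (Metric.ball_mem_nhds z₀ hε_pos)
    (Eventually.of_forall fun z => (by fun_prop :
      Continuous (fun s : ℝ => (R s : ℂ) * Complex.exp (z * s * Complex.I))).aestronglyMeasurable)
    (myintegrable hR hξ hdecay hz)
    ((by fun_prop : Continuous (fun s : ℝ =>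
      (R s : ℂ) * (s * Complex.I) * Complex.exp (z₀ * s * Complex.I))).aestronglyMeasurable)
    (Eventually.of_forall fun s => fun z hz' => hb z (key z hz') s)
    ((myint_exp_abs (by linarith : (0:ℝ) < ε / 2)).const_mul _)
    (Eventually.of_forall fun s => fun z _ => ?_)
  · exact main.2
  · have h := ((hasDerivAt_mul_const (x := z) ((s : ℂ) * Complex.I)).cexp).const_mul (R s : ℂ)
    rw [show (R s : ℂ) * (Complex.exp (z * ((s : ℂ) * Complex.I)) * ((s : ℂ) * Complex.I))
        = (R s : ℂ) * ((s : ℂ) * Complex.I) * Complex.exp (z * (s : ℂ) * Complex.I) by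
      rw [← mul_assoc z (s:ℂ) Complex.I]; ring] at h
    have hfun : (fun y : ℂ => (R s : ℂ) * Complex.exp (y * ((s : ℂ) * Complex.I)))
        = fun y : ℂ => (R s : ℂ) * Complex.exp (y * (s : ℂ) * Complex.I) := by
      funext y; rw [mul_assoc]
    rw [hfun] at h
    exact h

lemma myint_cos {R g : ℝ → ℝ} {C ξ : ℝ} (hc : Continuous g)
    (hξ : 0 < ξ) (hdecay : ∀ s : ℝ, |R s| ≤ C * Real.exp (-ξ * |s|))
    (h : ∀ s : ℝ, |g s| ≤ |R s|) :
    Integrable g := by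
  refine ((myint_exp_abs hξ).const_mul C).mono' hc.aestronglyMeasurable
    (Eventually.of_forall fun s => ?_)
  exact le_trans (h s) (hdecay s)

lemma myreal {R : ℝ → ℝ} {C ξ : ℝ} (hR : Continuous R) (hξ : 0 < ξ)
    (hdecay : ∀ s : ℝ, |R s| ≤ C * Real.exp (-ξ * |s|)) (ω : ℝ) :
    (∫ s : ℝ, (R s : ℂ) * Complex.exp ((ω : ℂ) * s * Complex.I))
      = ((∫ s : ℝ, R s * Real.cos (ω * s) : ℝ) : ℂ)
        + ((∫ s : ℝ, R s * Real.sin (ω * s) : ℝ) : ℂ) * Complex.I := by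
  have hcos : Integrable (fun s : ℝ => R s * Real.cos (ω * s)) :=
    myint_cos (by fun_prop) hξ hdecay (fun s => by
      rw [abs_mul]
      exact mul_le_of_le_one_right (abs_nonneg _) (Real.abs_cos_le_one _))
  have hsin : Integrable (fun s : ℝ => R s * Real.sin (ω * s)) :=
    myint_cos (by fun_prop) hξ hdecay (fun s => by
      rw [abs_mul]
      exact mul_le_of_le_one_right (abs_nonneg _) (Real.abs_sin_le_one _))
  have h1 : ∀ s : ℝ, (R s : ℂ) * Complex.exp ((ω : ℂ) * s * Complex.I)
      = ((R s * Real.cos (ω * s) : ℝ) : ℂ) + ((R s * Real.sin (ω * s) : ℝ) : ℂ) * Complex.I := by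
    intro s
    rw [show ((ω : ℂ) * s * Complex.I) = (((ω * s : ℝ) : ℂ)) * Complex.I by push_cast; ring,
      Complex.exp_mul_I, ← Complex.ofReal_cos, ← Complex.ofReal_sin]
    push_cast
    ring
  have hcosC : Integrable (fun s : ℝ => ((R s * Real.cos (ω * s) : ℝ) : ℂ)) volume :=
    hcos.ofReal
  have hsinC : Integrable (fun s : ℝ => ((R s * Real.sin (ω * s) : ℝ) : ℂ)) volume :=
    hsin.ofReal
  have e1 : (∫ s : ℝ, ((R s * Real.cos (ω * s) : ℝ) : ℂ))
      = ((∫ s : ℝ, R s * Real.cos (ω * s) : ℝ) : ℂ) := integral_ofReal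
  have e2 : (∫ s : ℝ, ((R s * Real.sin (ω * s) : ℝ) : ℂ))
      = ((∫ s : ℝ, R s * Real.sin (ω * s) : ℝ) : ℂ) := integral_ofReal
  simp_rw [h1]
  rw [integral_add hcosC (hsinC.mul_const Complex.I), integral_mul_const, e1, e2]

open scoped FourierTransform

/-- The common zeros of the Melnikov integrals C(ω), S(ω) of an exponentially
decaying, not identically zero function R form a discrete subset of ℝ. -/
theorem stmt17 (R : ℝ → ℝ) (hR : Continuous R)
    (C ξ : ℝ) (hC : 0 < C) (hξ : 0 < ξ)
    (hdecay : ∀ s : ℝ, |R s| ≤ C * Real.exp (-ξ * |s|))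
    (hne : R ≠ 0) :
    ∀ x : ℝ, ¬ AccPt x (Filter.principal {ω : ℝ |
      (∫ s : ℝ, R s * Real.cos (ω * s)) = 0 ∧
      (∫ s : ℝ, R s * Real.sin (ω * s)) = 0}) := by
  intro x hx
  set G : ℂ → ℂ := fun z => ∫ s : ℝ, (R s : ℂ) * Complex.exp (z * s * Complex.I) with hG
  set U : Set ℂ := Complex.im ⁻¹' Set.Ioo (-ξ) ξ with hU
  have hmemU : ∀ z : ℂ, z ∈ U ↔ |z.im| < ξ := by
    intro z; rw [hU, Set.mem_preimage, Set.mem_Ioo, abs_lt]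
  have hUopen : IsOpen U := isOpen_Ioo.preimage Complex.continuous_im
  have hUconv : Convex ℝ U := (convex_Ioo _ _).linear_preimage Complex.imLm
  have hGanal : AnalyticOnNhd ℂ G U := by
    apply DifferentiableOn.analyticOnNhd ?_ hUopen
    intro z hz
    exact (myderiv hR hC hξ hdecay ((hmemU z).1 hz)).differentiableAt.differentiableWithinAt
  -- every real common zero of the two integrals is a zero of G
  have hzeroG : ∀ ω : ℝ, (∫ s : ℝ, R s * Real.cos (ω * s)) = 0 →
      (∫ s : ℝ, R s * Real.sin (ω * s)) = 0 → G (ω : ℂ) = 0 := by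
    intro ω h1 h2
    rw [hG]
    simp only
    rw [myreal hR hξ hdecay ω, h1, h2]
    simp
  -- frequently zero near x
  have htend : Filter.Tendsto (fun y : ℝ => (y : ℂ)) (nhdsWithin x {x}ᶜ)
      (nhdsWithin (x : ℂ) {(x : ℂ)}ᶜ) := by
    apply tendsto_nhdsWithin_of_tendsto_nhds_of_eventually_within
    · exact (Complex.continuous_ofReal.tendsto x).mono_left nhdsWithin_le_nhds
    · filter_upwards [self_mem_nhdsWithin] with y hy
      simp only [Set.mem_compl_iff, Set.mem_singleton_iff] at hy ⊢
      exact fun h => hy (Complex.ofReal_injective h)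
  have hfreq : ∃ᶠ z in nhdsWithin (x : ℂ) {(x : ℂ)}ᶜ, G z = 0 := by
    refine htend.frequently ?_
    rw [accPt_iff_frequently] at hx
    rw [frequently_nhdsWithin_iff]
    refine hx.mono ?_
    rintro y ⟨hy1, hy2, hy3⟩
    exact ⟨hzeroG y hy2 hy3, hy1⟩
  have hxU : (x : ℂ) ∈ U := by rw [hmemU]; simpa using hξ
  have hGzero : Set.EqOn G 0 U :=
    hGanal.eqOn_zero_of_preconnected_of_frequently_eq_zero hUconv.isPreconnected hxU hfreq
  -- hence the Fourier transform of R vanishes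
  set f : ℝ → ℂ := fun s => (R s : ℂ) with hf
  have hfint : Integrable f := by
    refine myintegrable hR hξ hdecay (z := 0) (by simpa using hξ) |>.congr ?_
    · exact Eventually.of_forall fun s => by simp [hf]
  have hFT : 𝓕 f = 0 := by
    funext w
    rw [Real.fourier_real_eq_integral_exp_smul]
    have : (∫ v : ℝ, Complex.exp (((-2 * Real.pi * v * w : ℝ) : ℂ) * Complex.I) • f v)
        = G ((-2 * Real.pi * w : ℝ) : ℂ) := by
      rw [hG]
      congr 1
      funext v
      rw [smul_eq_mul, mul_comm]
      congr 2
      push_cast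
      ring
    rw [this, hGzero (by rw [hmemU]; simpa using hξ)]
    rfl
  have hinv : f = 0 := by
    have hc : Continuous f := Complex.continuous_ofReal.comp hR
    have h0 : Integrable (𝓕 f) := by rw [hFT]; exact integrable_zero _ _ _
    have := hc.fourierInv_fourier_eq hfint h0
    rw [hFT] at this
    rw [← this]
    funext w
    rw [Real.fourierInv_eq]
    simp
  apply hne
  funext s
  have := congrFun hinv s
  simpa [hf, Complex.ofReal_eq_zero] using this
end

section
/- Let I ⊂ ℝ be an open interval and let w : I → ℝ be a C¹ function with |w(θ)| ≤ 1 and |w′(θ)| ≤ 1/100 for all θ ∈ I, such that for every θ ∈ I the point p = (θ, w(θ)) lies in V and satisfies F(p) ≥ √k and |1 − d·F_θ(p)/F(p)| ≥ 2. Write (Θ(θ), Z(θ)) = T(θ, w(θ)). Then for all θ ∈ I: |Θ′(θ)| ≥ 3/2 and |Z′(θ)| ≤ γ·b·12^γ ≤ 10⁻⁴. In particular Θ is strictly monotone on I, and the image curve {T(θ, w(θ)) : θ ∈ I} is the graph of a C¹ function w₁ over the interval Θ(I) with |w₁′| ≤ 10⁻⁴ everywhere. -/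
set_option maxHeartbeats 1000000


/-- One-step graph transform estimate: T maps a nearly horizontal C¹ graph in the
expanding region to a nearly horizontal C¹ graph, with |Θ′| ≥ 3/2 and |Z′| ≤ γb12^γ. -/
theorem stmt19 (d γ c a k b : ℝ) (E : ℝ → ℝ → ℝ)
    (hd : 100 ≤ d) (hγ : 1 < γ) (hc : c ∈ Set.Icc (2:ℝ) 10)
    (hk : 0 < k) (hb : 0 < b)
    (hdk : d * Real.sqrt k ≤ 1/100)
    (hγb : γ * b * (12:ℝ) ^ γ ≤ 1/10000)
    (hE : ContDiff ℝ 1 (Function.uncurry E))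
    (hEbd : ∀ θ z : ℝ, |E θ z| + |deriv (fun t => E t z) θ| ≤ 1/50 ∧
      |deriv (fun t => E θ t) z| ≤ k/2)
    (F T₁ T₂ : ℝ → ℝ → ℝ)
    (hF : F = fun θ z => 1 + c * Real.sin θ + k * z + E θ z)
    (hT₁ : T₁ = fun θ z => θ + a - d * Real.log (F θ z))
    (hT₂ : T₂ = fun θ z => b * (F θ z) ^ γ)
    (i₁ i₂ : ℝ) (hi : i₁ < i₂)
    (w : ℝ → ℝ) (hw : ContDiffOn ℝ 1 w (Set.Ioo i₁ i₂))
    (hwbd : ∀ θ ∈ Set.Ioo i₁ i₂, |w θ| ≤ 1 ∧ |deriv w θ| ≤ 1/100)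
    (hpts : ∀ θ ∈ Set.Ioo i₁ i₂, 0 < F θ (w θ) ∧ Real.sqrt k ≤ F θ (w θ) ∧
      2 ≤ |1 - d * (deriv (fun t => F t (w θ)) θ) / F θ (w θ)|) :
    (∀ θ ∈ Set.Ioo i₁ i₂,
      3/2 ≤ |deriv (fun t => T₁ t (w t)) θ| ∧
      |deriv (fun t => T₂ t (w t)) θ| ≤ γ * b * (12:ℝ) ^ γ ∧
      γ * b * (12:ℝ) ^ γ ≤ 1/10000) ∧
    (StrictMonoOn (fun t => T₁ t (w t)) (Set.Ioo i₁ i₂) ∨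
      StrictAntiOn (fun t => T₁ t (w t)) (Set.Ioo i₁ i₂)) ∧
    ∃ w₁ : ℝ → ℝ,
      ContDiffOn ℝ 1 w₁ ((fun t => T₁ t (w t)) '' Set.Ioo i₁ i₂) ∧
      (∀ θ ∈ Set.Ioo i₁ i₂, w₁ (T₁ θ (w θ)) = T₂ θ (w θ)) ∧
      (∀ s ∈ (fun t => T₁ t (w t)) '' Set.Ioo i₁ i₂, |deriv w₁ s| ≤ 1/10000) := by
  classical
  obtain ⟨hc2, hc10⟩ := hc
  set I : Set ℝ := Set.Ioo i₁ i₂ with hIdef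
  have hIopen : IsOpen I := isOpen_Ioo
  -- basic facts about k
  have hs0 : 0 < Real.sqrt k := Real.sqrt_pos.2 hk
  have hssq : Real.sqrt k * Real.sqrt k = k := Real.mul_self_sqrt hk.le
  have hs4 : Real.sqrt k ≤ 1/10000 := by nlinarith
  have hk8 : k ≤ 1/100000000 := by nlinarith
  -- uncurried E and its partial derivatives
  set u : ℝ × ℝ → ℝ := Function.uncurry E with hudef
  have hud : Differentiable ℝ u := hE.differentiable one_ne_zero
  have hEt : ∀ θ z : ℝ, HasDerivAt (fun t => E t z) (fderiv ℝ u (θ, z) (1, 0)) θ := by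
    intro θ z
    have h1 : HasDerivAt (fun t : ℝ => ((t, z) : ℝ × ℝ)) (1, 0) θ :=
      (hasDerivAt_id θ).prodMk (hasDerivAt_const θ z)
    exact ((hud (θ, z)).hasFDerivAt).comp_hasDerivAt θ h1
  have hEz : ∀ θ z : ℝ, HasDerivAt (fun t => E θ t) (fderiv ℝ u (θ, z) (0, 1)) z := by
    intro θ z
    have h1 : HasDerivAt (fun t : ℝ => ((θ, t) : ℝ × ℝ)) (0, 1) z :=
      (hasDerivAt_const z θ).prodMk (hasDerivAt_id z)
    exact ((hud (θ, z)).hasFDerivAt).comp_hasDerivAt z h1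
  have hPbd : ∀ θ z : ℝ, |fderiv ℝ u (θ, z) (1, 0)| ≤ 1/50 := by
    intro θ z
    have h := (hEbd θ z).1
    rw [(hEt θ z).deriv] at h
    have := abs_nonneg (E θ z); linarith
  have hEbd1 : ∀ θ z : ℝ, |E θ z| ≤ 1/50 := by
    intro θ z
    have h := (hEbd θ z).1
    have := abs_nonneg (deriv (fun t => E t z) θ); linarith
  have hQbd : ∀ θ z : ℝ, |fderiv ℝ u (θ, z) (0, 1)| ≤ k/2 := by
    intro θ z
    have h := (hEbd θ z).2
    rwa [(hEz θ z).deriv] at h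
  -- the graph functions
  set g : ℝ → ℝ := fun t => 1 + c * Real.sin t + k * w t + E t (w t) with hgdef
  set Θ : ℝ → ℝ := fun t => t + a - d * Real.log (g t) with hΘdef
  set Z : ℝ → ℝ := fun t => b * g t ^ γ with hZdef
  have hFg : ∀ t, F t (w t) = g t := by intro t; rw [hF]
  have hTΘ : ∀ t, T₁ t (w t) = Θ t := by intro t; rw [hT₁, hF]
  have hTZ : ∀ t, T₂ t (w t) = Z t := by intro t; rw [hT₂, hF]
  have hgpos : ∀ θ ∈ I, 0 < g θ := by
    intro θ hθ; rw [← hFg]; exact (hpts θ hθ).1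
  have hgs : ∀ θ ∈ I, Real.sqrt k ≤ g θ := by
    intro θ hθ; rw [← hFg]; exact (hpts θ hθ).2.1
  have hgne : ∀ θ ∈ I, g θ ≠ 0 := fun θ hθ => (hgpos θ hθ).ne'
  have hg12 : ∀ θ ∈ I, g θ ≤ 12 := by
    intro θ hθ
    have h1 : c * Real.sin θ ≤ 10 := by
      nlinarith [Real.sin_le_one θ, Real.neg_one_le_sin θ]
    have h2 : k * w θ ≤ k := by
      have := (hwbd θ hθ).1
      have := abs_le.1 this
      nlinarith
    have h3 := abs_le.1 (hEbd1 θ (w θ))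
    simp only [hgdef]
    nlinarith
  -- derivative of w
  have hwd : ∀ θ ∈ I, HasDerivAt w (deriv w θ) θ := by
    intro θ hθ
    exact ((hw.contDiffAt (hIopen.mem_nhds hθ)).differentiableAt one_ne_zero).hasDerivAt
  -- derivative of g
  have hgd : ∀ θ ∈ I, HasDerivAt g
      (c * Real.cos θ + k * deriv w θ +
        (fderiv ℝ u (θ, w θ) (1, 0) + deriv w θ * fderiv ℝ u (θ, w θ) (0, 1))) θ := by
    intro θ hθ
    have hpath : HasDerivAt (fun t : ℝ => ((t, w t) : ℝ × ℝ)) (1, deriv w θ) θ :=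
      (hasDerivAt_id θ).prodMk (hwd θ hθ)
    have hcomp : HasDerivAt (fun t => E t (w t))
        (fderiv ℝ u (θ, w θ) (1, deriv w θ)) θ :=
      by have := ((hud (θ, w θ)).hasFDerivAt).comp_hasDerivAt θ hpath; exact this
    have hsplit : fderiv ℝ u (θ, w θ) (1, deriv w θ) =
        fderiv ℝ u (θ, w θ) (1, 0) + deriv w θ * fderiv ℝ u (θ, w θ) (0, 1) := by
      have h : ((1:ℝ), deriv w θ) = (1, 0) + deriv w θ • ((0:ℝ), (1:ℝ)) := by
        simp [Prod.ext_iff]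
      rw [h, map_add, map_smul, smul_eq_mul]
    rw [hsplit] at hcomp
    have h1 : HasDerivAt (fun t => 1 + c * Real.sin t + k * w t) (c * Real.cos θ + k * deriv w θ) θ := by
      have := (((Real.hasDerivAt_sin θ).const_mul c).const_add 1).add ((hwd θ hθ).const_mul k)
      convert this using 1 <;> rfl
    exact h1.add hcomp
  -- the fixed-z partial derivative of F along the graph
  have hFθ : ∀ θ ∈ I, deriv (fun t => F t (w θ)) θ =
      c * Real.cos θ + fderiv ℝ u (θ, w θ) (1, 0) := by
    intro θ hθ
    have h1 : HasDerivAt (fun t => F t (w θ))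
        (c * Real.cos θ + fderiv ℝ u (θ, w θ) (1, 0)) θ := by
      rw [hF]
      have h2 : HasDerivAt (fun t => 1 + c * Real.sin t + k * w θ) (c * Real.cos θ) θ := by
        have := (((Real.hasDerivAt_sin θ).const_mul c).const_add 1).add_const (k * w θ)
        convert this using 1
      exact h2.add (hEt θ (w θ))
    exact h1.deriv
  -- derivative of Θ
  have hΘd : ∀ θ ∈ I, HasDerivAt Θ
      (1 - d * ((c * Real.cos θ + k * deriv w θ +
        (fderiv ℝ u (θ, w θ) (1, 0) + deriv w θ * fderiv ℝ u (θ, w θ) (0, 1))) / g θ)) θ := by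
    intro θ hθ
    have hlog := ((hgd θ hθ).log (hgne θ hθ)).const_mul d
    have hid : HasDerivAt (fun t : ℝ => t + a) 1 θ := (hasDerivAt_id θ).add_const a
    convert hid.sub hlog using 1 <;> rfl
  -- derivative of Z
  have hZd : ∀ θ ∈ I, HasDerivAt Z
      (b * ((c * Real.cos θ + k * deriv w θ +
        (fderiv ℝ u (θ, w θ) (1, 0) + deriv w θ * fderiv ℝ u (θ, w θ) (0, 1))) * γ *
          g θ ^ (γ - 1))) θ := by
    intro θ hθ
    exact ((hgd θ hθ).rpow_const (Or.inl (hgne θ hθ))).const_mul b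
  -- bound on |Θ'|
  have hΘbd : ∀ θ ∈ I, 3/2 ≤ |deriv Θ θ| := by
    intro θ hθ
    rw [(hΘd θ hθ).deriv]
    set p := fderiv ℝ u (θ, w θ) (1, 0) with hp
    set q := fderiv ℝ u (θ, w θ) (0, 1) with hq
    set w' := deriv w θ with hw'
    have hA : 2 ≤ |1 - d * (c * Real.cos θ + p) / g θ| := by
      have := (hpts θ hθ).2.2
      rwa [hFθ θ hθ, hFg] at this
    have hpb := hPbd θ (w θ); rw [← hp] at hpb
    have hqb := hQbd θ (w θ); rw [← hq] at hqb
    have hw'b := (hwbd θ hθ).2; rw [← hw'] at hw'b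
    have hgθ := hgpos θ hθ
    have hgsθ := hgs θ hθ
    -- split
    have hsplit : 1 - d * ((c * Real.cos θ + k * w' + (p + w' * q)) / g θ) =
        (1 - d * (c * Real.cos θ + p) / g θ) - d * ((k * w' + w' * q) / g θ) := by
      field_simp
      ring
    rw [hsplit]
    have hB : |d * ((k * w' + w' * q) / g θ)| ≤ 1/2 := by
      have hd0 : (0:ℝ) < d := by linarith
      have hnum : |k * w' + w' * q| ≤ 3 * k / 200 := by
        have e : k * w' + w' * q = w' * (k + q) := by ring
        rw [e, abs_mul]
        have h1 : |k + q| ≤ 3 * k / 2 := by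
          refine (abs_add_le k q).trans ?_
          rw [abs_of_pos hk]; linarith
        have h2 := mul_le_mul hw'b h1 (abs_nonneg (k + q)) (by norm_num : (0:ℝ) ≤ 1/100)
        linarith
      rw [abs_mul, abs_div, abs_of_pos hgθ, abs_of_pos hd0]
      have h2 : |k * w' + w' * q| / g θ ≤ (3 * k / 200) / Real.sqrt k :=
        div_le_div₀ (by positivity) hnum hs0 hgsθ
      have h3 : (3 * k / 200) / Real.sqrt k = 3 * Real.sqrt k / 200 := by
        rw [div_eq_iff hs0.ne']; nlinarith
      rw [h3] at h2
      have h4 : d * (|k * w' + w' * q| / g θ) ≤ d * (3 * Real.sqrt k / 200) :=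
        mul_le_mul_of_nonneg_left h2 hd0.le
      have h5 : d * (3 * Real.sqrt k / 200) ≤ 3 / 20000 := by nlinarith
      calc d * (|k * w' + w' * q| / g θ) ≤ 3/20000 := le_trans h4 h5
        _ ≤ 1/2 := by norm_num
    have := abs_sub_abs_le_abs_sub (1 - d * (c * Real.cos θ + p) / g θ)
      (d * ((k * w' + w' * q) / g θ))
    linarith
  -- bound on |Z'|
  have hZbd : ∀ θ ∈ I, |deriv Z θ| ≤ γ * b * (12:ℝ) ^ γ := by
    intro θ hθ
    rw [(hZd θ hθ).deriv]
    set p := fderiv ℝ u (θ, w θ) (1, 0) with hp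
    set q := fderiv ℝ u (θ, w θ) (0, 1) with hq
    set w' := deriv w θ with hw'
    have hpb := abs_le.1 (hPbd θ (w θ)); rw [← hp] at hpb
    have hqb := abs_le.1 (hQbd θ (w θ)); rw [← hq] at hqb
    have hw'b := abs_le.1 ((hwbd θ hθ).2); rw [← hw'] at hw'b
    have hg' : |c * Real.cos θ + k * w' + (p + w' * q)| ≤ 12 := by
      have hcos := Real.neg_one_le_cos θ
      have hcos' := Real.cos_le_one θ
      rw [abs_le]
      constructor <;> nlinarith
    have hrpow : g θ ^ (γ - 1) ≤ (12:ℝ) ^ (γ - 1) :=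
      Real.rpow_le_rpow (hgpos θ hθ).le (hg12 θ hθ) (by linarith)
    have hrnn : (0:ℝ) ≤ g θ ^ (γ - 1) := Real.rpow_nonneg (hgpos θ hθ).le _
    have h12 : ((12:ℝ) ^ (γ - 1)) * 12 = (12:ℝ) ^ γ := by
      rw [Real.rpow_sub (by norm_num : (0:ℝ) < 12), Real.rpow_one]
      field_simp
    have hγ0 : (0:ℝ) < γ := by linarith
    rw [abs_mul, abs_of_pos hb, abs_mul, abs_mul, abs_of_pos hγ0,
      abs_of_nonneg hrnn]
    have hkey : |c * Real.cos θ + k * w' + (p + w' * q)| * g θ ^ (γ - 1) ≤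
        (12:ℝ) ^ γ := by
      rw [← h12]
      calc |c * Real.cos θ + k * w' + (p + w' * q)| * g θ ^ (γ - 1)
          ≤ 12 * (12:ℝ) ^ (γ - 1) := mul_le_mul hg' hrpow hrnn (by norm_num)
        _ = (12:ℝ) ^ (γ - 1) * 12 := by ring
    calc b * (|c * Real.cos θ + k * w' + (p + w' * q)| * γ * g θ ^ (γ - 1))
        = γ * b * (|c * Real.cos θ + k * w' + (p + w' * q)| * g θ ^ (γ - 1)) := by ring
      _ ≤ γ * b * (12:ℝ) ^ γ := mul_le_mul_of_nonneg_left hkey (by positivity)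
  -- smoothness of g, Θ, Z
  have hgC : ContDiffOn ℝ 1 g I := by
    have hEcomp : ContDiffOn ℝ 1 (fun t => E t (w t)) I := by
      have : ContDiffOn ℝ 1 (u ∘ fun t => (t, w t)) I :=
        hE.comp_contDiffOn (contDiffOn_id.prodMk hw)
      exact this
    exact ((contDiffOn_const.add (contDiffOn_const.mul Real.contDiff_sin.contDiffOn)).add
      (contDiffOn_const.mul hw)).add hEcomp
  have hΘC : ContDiffOn ℝ 1 Θ I := by
    exact ((contDiffOn_id.add contDiffOn_const).sub
      (contDiffOn_const.mul (hgC.log hgne)))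
  have hZC : ContDiffOn ℝ 1 Z I :=
    contDiffOn_const.mul (hgC.rpow_const_of_ne hgne)
  have hone : (1 : WithTop ℕ∞) = 0 + 1 := by norm_num
  have hΘ'cont : ContinuousOn (deriv Θ) I := by
    have := (contDiffOn_succ_iff_deriv_of_isOpen (n := 0) hIopen).1 (hone ▸ hΘC)
    exact this.2.2.continuousOn
  have hZ'cont : ContinuousOn (deriv Z) I := by
    have := (contDiffOn_succ_iff_deriv_of_isOpen (n := 0) hIopen).1 (hone ▸ hZC)
    exact this.2.2.continuousOn
  have hΘ'ne : ∀ θ ∈ I, deriv Θ θ ≠ 0 := by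
    intro θ hθ h
    have := hΘbd θ hθ
    rw [h, abs_zero] at this; linarith
  -- sign dichotomy for deriv Θ
  have hθ₀ : (i₁ + i₂)/2 ∈ I := ⟨by linarith, by linarith⟩
  have hIVT : ∀ θ₁ ∈ I, ∀ θ₂ ∈ I, deriv Θ θ₁ < 0 → 0 < deriv Θ θ₂ → False := by
    intro θ₁ hθ₁ θ₂ hθ₂ h1 h2
    have hsub : Set.uIcc θ₁ θ₂ ⊆ I :=
      (Set.ordConnected_Ioo).uIcc_subset hθ₁ hθ₂
    have h0 : (0:ℝ) ∈ Set.uIcc (deriv Θ θ₁) (deriv Θ θ₂) :=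
      Set.mem_uIcc.2 (Or.inl ⟨h1.le, h2.le⟩)
    obtain ⟨θ₃, hθ₃, hval⟩ := intermediate_value_uIcc (hΘ'cont.mono hsub) h0
    exact hΘ'ne θ₃ (hsub hθ₃) hval
  have hsign : (∀ θ ∈ I, 0 < deriv Θ θ) ∨ (∀ θ ∈ I, deriv Θ θ < 0) := by
    rcases lt_or_gt_of_ne (hΘ'ne _ hθ₀) with h0 | h0
    · right
      intro θ hθ
      rcases lt_or_gt_of_ne (hΘ'ne θ hθ) with h | h
      · exact h
      · exact absurd (hIVT _ hθ₀ θ hθ h0 h) (fun f => f)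
    · left
      intro θ hθ
      rcases lt_or_gt_of_ne (hΘ'ne θ hθ) with h | h
      · exact absurd (hIVT θ hθ _ hθ₀ h h0) (fun f => f)
      · exact h
  have hmono : StrictMonoOn Θ I ∨ StrictAntiOn Θ I := by
    rcases hsign with h | h
    · left
      apply strictMonoOn_of_deriv_pos (convex_Ioo i₁ i₂) hΘC.continuousOn
      intro x hx
      rw [interior_Ioo] at hx
      exact h x hx
    · right
      apply strictAntiOn_of_deriv_neg (convex_Ioo i₁ i₂) hΘC.continuousOn
      intro x hx
      rw [interior_Ioo] at hx
      exact h x hx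
  have hinj : Set.InjOn Θ I := hmono.elim (fun h => h.injOn) (fun h => h.injOn)
  -- inverse function
  set Θi : ℝ → ℝ := Function.invFunOn Θ I with hΘidef
  have hleft : ∀ θ ∈ I, Θi (Θ θ) = θ := fun θ hθ => hinj.leftInvOn_invFunOn hθ
  have hstrict : ∀ θ ∈ I, HasStrictDerivAt Θ (deriv Θ θ) θ := fun θ hθ =>
    (hΘC.contDiffAt (hIopen.mem_nhds hθ)).hasStrictDerivAt one_ne_zero
  have hinvd : ∀ θ ∈ I, HasStrictDerivAt Θi (deriv Θ θ)⁻¹ (Θ θ) := by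
    intro θ hθ
    apply (hstrict θ hθ).to_local_left_inverse (hΘ'ne θ hθ)
    filter_upwards [hIopen.mem_nhds hθ] with x hx using hleft x hx
  have hopen : IsOpen (Θ '' I) := by
    rw [isOpen_iff_mem_nhds]
    rintro s ⟨θ, hθ, rfl⟩
    rw [← (hstrict θ hθ).map_nhds_eq (hΘ'ne θ hθ)]
    exact Filter.image_mem_map (hIopen.mem_nhds hθ)
  set w₁ : ℝ → ℝ := fun s => Z (Θi s) with hw₁def
  have hw₁d : ∀ θ ∈ I, HasDerivAt w₁ (deriv Z θ * (deriv Θ θ)⁻¹) (Θ θ) := by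
    intro θ hθ
    have h1 : HasDerivAt Θi (deriv Θ θ)⁻¹ (Θ θ) := (hinvd θ hθ).hasDerivAt
    have h2 : HasDerivAt Z (deriv Z θ) (Θi (Θ θ)) := by
      rw [hleft θ hθ, (hZd θ hθ).deriv]; exact hZd θ hθ
    exact h2.comp (Θ θ) h1
  have hw₁deriv : ∀ θ ∈ I, deriv w₁ (Θ θ) = deriv Z θ * (deriv Θ θ)⁻¹ :=
    fun θ hθ => (hw₁d θ hθ).deriv
  refine ⟨?_, ?_, ?_⟩
  · -- pointwise derivative bounds
    intro θ hθ
    have e1 : (fun t => T₁ t (w t)) = Θ := funext hTΘ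
    have e2 : (fun t => T₂ t (w t)) = Z := funext hTZ
    rw [e1, e2]
    exact ⟨hΘbd θ hθ, hZbd θ hθ, hγb⟩
  · -- monotonicity
    have e1 : (fun t => T₁ t (w t)) = Θ := funext hTΘ
    rw [e1]
    exact hmono
  · -- the image graph
    have e1 : (fun t => T₁ t (w t)) = Θ := funext hTΘ
    rw [e1]
    refine ⟨w₁, ?_, ?_, ?_⟩
    · -- ContDiffOn
      have hΘicont : ContinuousOn Θi (Θ '' I) := by
        rintro s ⟨θ, hθ, rfl⟩
        exact ((hinvd θ hθ).hasDerivAt.continuousAt).continuousWithinAt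
      have hΘimaps : Set.MapsTo Θi (Θ '' I) I := by
        rintro s ⟨θ, hθ, rfl⟩
        rw [hleft θ hθ]; exact hθ
      have hdiff : DifferentiableOn ℝ w₁ (Θ '' I) := by
        rintro s ⟨θ, hθ, rfl⟩
        exact (hw₁d θ hθ).differentiableAt.differentiableWithinAt
      have hderiv_eq : Set.EqOn (deriv w₁)
          (fun s => deriv Z (Θi s) * (deriv Θ (Θi s))⁻¹) (Θ '' I) := by
        rintro s ⟨θ, hθ, rfl⟩
        rw [hw₁deriv θ hθ]
        simp only [hleft θ hθ]
      have hcont : ContinuousOn (fun s => deriv Z (Θi s) * (deriv Θ (Θi s))⁻¹) (Θ '' I) :=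
        (hZ'cont.comp hΘicont hΘimaps).mul
          ((hΘ'cont.comp hΘicont hΘimaps).inv₀ fun s hs => hΘ'ne (Θi s) (hΘimaps hs))
      rw [hone]
      refine (contDiffOn_succ_iff_deriv_of_isOpen hopen).2 ⟨hdiff, by simp, ?_⟩
      rw [contDiffOn_zero]
      exact hcont.congr hderiv_eq
    · -- w₁ ∘ Θ = Z
      intro θ hθ
      rw [hTΘ θ, hTZ θ, hw₁def]
      simp only []
      rw [hleft θ hθ]
    · -- derivative bound
      rintro s ⟨θ, hθ, rfl⟩
      rw [hw₁deriv θ hθ]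
      have h1 := hZbd θ hθ
      have h2 := hΘbd θ hθ
      have h3 : |(deriv Θ θ)⁻¹| ≤ 2/3 := by
        rw [abs_inv]
        rw [inv_le_iff_one_le_mul₀ (by linarith)]
        nlinarith [abs_nonneg (deriv Θ θ)]
      rw [abs_mul]
      have h4 : |deriv Z θ| ≤ 1/10000 := le_trans h1 hγb
      nlinarith [abs_nonneg (deriv Z θ), abs_nonneg ((deriv Θ θ)⁻¹)]
end
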